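/- arXiv:1404.7409 — 2 statements merged into one kernel-verified Lean document; each statement's English description precedes it below -/
import Mathlib

section
/- Fix 0 < q < 1, 0 < α < q^θ with θ > 0 and A = log_q α, and parametrize the contour C_{A,π/4} by W(s) = log_q(α + s e^{iπ/4}) for s ≥ 0. Then with g_0 as above, for all s > 0, d/ds Re[g_0(W(s))] > Σ_{k=0}^∞ q^{2k} s^2 ( q^k s^2 cos(π/4) - (1-2α q^k) s cos(π/2) - α(1-α q^k) cos(3π/4) ) / ((1-α q^k)^2 |α + s e^{iπ/4}|^2 |1-(α+s e^{iπ/4})q^k|^2 ) > 0; in particular s ↦ Re[g_0(W(s))] is strictly increasing on (0,∞). -/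
open Complex Real

/-- The infinite q-Pochhammer symbol `(a; q)_∞ = ∏_{k=0}^∞ (1 - a q^k)`. -/
noncomputable def qPoch (a q : ℂ) : ℂ := ∏' k : ℕ, (1 - a * q ^ k)

/-- The q-Gamma function `Γ_q(z) = (1-q)^{1-z} (q;q)_∞ / (q^z;q)_∞`. -/
noncomputable def qGamma (q : ℝ) (z : ℂ) : ℂ :=
  ((1 - q : ℂ)) ^ ((1 : ℂ) - z) * qPoch (q : ℂ) (q : ℂ) / qPoch ((q : ℂ) ^ z) (q : ℂ)

/-- The q-digamma function `Ψ_q(z) = d/dz log Γ_q(z)`. -/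
noncomputable def qDigamma (q : ℝ) (z : ℂ) : ℂ :=
  deriv (fun w => Complex.log (qGamma q w)) z

/-- `κ(q,θ) = Ψ'_q(θ) / ((log q)^2 q^θ)`. -/
noncomputable def kappaC (q θ : ℝ) : ℂ :=
  deriv (qDigamma q) (θ : ℂ) / (((Real.log q : ℂ)) ^ 2 * (q : ℂ) ^ (θ : ℂ))

/-- `f(q,θ) = Ψ'_q(θ)/(log q)^2 - Ψ_q(θ)/log q - log(1-q)/log q`. -/
noncomputable def fC (q θ : ℝ) : ℂ :=
  deriv (qDigamma q) (θ : ℂ) / ((Real.log q : ℂ)) ^ 2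
    - qDigamma q (θ : ℂ) / (Real.log q : ℂ)
    - (Real.log (1 - q) : ℂ) / (Real.log q : ℂ)

/-- `f₀(Z) = -f (log q) Z + κ q^Z + log((q^Z; q)_∞)`. -/
noncomputable def f0 (q θ : ℝ) (Z : ℂ) : ℂ :=
  -fC q θ * (Real.log q : ℂ) * Z + kappaC q θ * (q : ℂ) ^ Z
    + Complex.log (qPoch ((q : ℂ) ^ Z) (q : ℂ))

/-- `A = log_q α`. -/
noncomputable def Aq (q α : ℝ) : ℝ := Real.log α / Real.log q

/-- `g(q,θ) = (Ψ'_q(θ)/(log q)^2)(α/q^θ) - Ψ_q(A)/log q - log(1-q)/log q`. -/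
noncomputable def gC (q θ α : ℝ) : ℂ :=
  deriv (qDigamma q) (θ : ℂ) / ((Real.log q : ℂ)) ^ 2 * ((α : ℂ) / (q : ℂ) ^ (θ : ℂ))
    - qDigamma q ((Aq q α : ℝ) : ℂ) / (Real.log q : ℂ)
    - (Real.log (1 - q) : ℂ) / (Real.log q : ℂ)

/-- `g₀(Z) = -g (log q) Z + κ q^Z + log((q^Z; q)_∞)`. -/
noncomputable def g0 (q θ α : ℝ) (Z : ℂ) : ℂ :=
  -gC q θ α * (Real.log q : ℂ) * Z + kappaC q θ * (q : ℂ) ^ Z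
    + Complex.log (qPoch ((q : ℂ) ^ Z) (q : ℂ))

/-- The contour `C_{A,π/4}` parametrized by `W(s) = log_q(α + s e^{iπ/4})` for `s ≥ 0`. -/
noncomputable def WcA (q α : ℝ) (s : ℝ) : ℂ :=
  Complex.log ((α : ℂ) + (s : ℂ) * Complex.exp (Complex.I * (Real.pi / 4))) / (Real.log q : ℂ)

namespace G0A

variable {q : ℝ}

/-- summable comparison to geometric -/
lemma summable_geom_bound {E : Type*} [NormedAddCommGroup E] [CompleteSpace E]
    (hq0 : 0 < q) (hq1 : q < 1) {f : ℕ → E} {C : ℝ} (h : ∀ k, ‖f k‖ ≤ C * q ^ k) :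
    Summable f :=
  Summable.of_norm_bounded (((summable_geometric_of_lt_one hq0.le hq1)).mul_left C) h

lemma summable_log (hq0 : 0 < q) (hq1 : q < 1) (u : ℂ) :
    Summable (fun k : ℕ => Complex.log (1 - u * (q : ℂ) ^ k)) := by
  obtain ⟨K, hK⟩ : ∃ K : ℕ, q ^ K < (1/2) / (‖u‖ + 1) := by
    refine exists_pow_lt_of_lt_one (by positivity) hq1
  have habs : ‖u‖ * q ^ K ≤ 1 / 2 := by
    have h1 : ‖u‖ * q ^ K ≤ (‖u‖ + 1) * ((1/2)/(‖u‖ + 1)) := by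
      apply mul_le_mul (by linarith [norm_nonneg u]) hK.le (by positivity)
        (by positivity)
    rwa [mul_div_cancel₀ _ (by positivity)] at h1
  rw [← summable_nat_add_iff K]
  apply summable_geom_bound hq0 hq1 (C := 3/2 * (1/2))
  intro k
  have hz : ‖-(u * (q:ℂ) ^ (k + K))‖ ≤ 1/2 * q ^ k := by
    rw [norm_neg, norm_mul]
    have : ‖(q:ℂ) ^ (k + K)‖ = q ^ (k + K) := by
      rw [← Complex.ofReal_pow, Complex.norm_real, Real.norm_eq_abs, abs_of_pos (by positivity)]
    rw [this, pow_add]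
    calc ‖u‖ * (q ^ k * q ^ K) = (‖u‖ * q ^ K) * q ^ k := by ring
      _ ≤ 1/2 * q ^ k := by
          apply mul_le_mul_of_nonneg_right habs (by positivity)
  have hz2 : ‖-(u * (q:ℂ) ^ (k + K))‖ ≤ 1/2 := by
    calc ‖-(u * (q:ℂ) ^ (k + K))‖ ≤ 1/2 * q ^ k := hz
      _ ≤ 1/2 * 1 := by
          apply mul_le_mul_of_nonneg_left (pow_le_one₀ hq0.le hq1.le) (by norm_num)
      _ = 1/2 := by norm_num
  calc ‖Complex.log (1 - u * (q:ℂ) ^ (k + K))‖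
      = ‖Complex.log (1 + -(u * (q:ℂ) ^ (k + K)))‖ := by rw [sub_eq_add_neg]
    _ ≤ 3/2 * ‖-(u * (q:ℂ) ^ (k + K))‖ := Complex.norm_log_one_add_half_le_self hz2
    _ ≤ 3/2 * (1/2 * q ^ k) := by
        apply mul_le_mul_of_nonneg_left hz (by norm_num)
    _ = 3/2 * (1/2) * q ^ k := by ring

lemma qPoch_eq_exp (hq0 : 0 < q) (hq1 : q < 1) (u : ℂ)
    (hne : ∀ k : ℕ, 1 - u * (q : ℂ) ^ k ≠ 0) :
    qPoch u q = Complex.exp (∑' k : ℕ, Complex.log (1 - u * (q : ℂ) ^ k)) := by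
  exact (Complex.cexp_tsum_eq_tprod (f := fun k => 1 - u * (q:ℂ) ^ k) hne
    (summable_log hq0 hq1 u)).symm

lemma re_log_qPoch (hq0 : 0 < q) (hq1 : q < 1) (u : ℂ)
    (hne : ∀ k : ℕ, 1 - u * (q : ℂ) ^ k ≠ 0) :
    (Complex.log (qPoch u q)).re
      = ∑' k : ℕ, Real.log (‖1 - u * (q : ℂ) ^ k‖) := by
  rw [qPoch_eq_exp hq0 hq1 u hne, Complex.log_re, Complex.norm_exp, Real.log_exp,
    Complex.re_tsum (summable_log hq0 hq1 u)]
  exact tsum_congr fun k => (Complex.log_re _)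

end G0A



namespace G0A
variable {q : ℝ}

noncomputable def Lf (q : ℝ) (u : ℂ) : ℂ := ∑' k : ℕ, Complex.log (1 - u * (q : ℂ) ^ k)
noncomputable def Nf (q : ℝ) (u : ℂ) : ℂ := ∑' k : ℕ, -((q : ℂ) ^ k / (1 - u * (q : ℂ) ^ k))
noncomputable def Nf' (q : ℝ) (u : ℂ) : ℂ :=
  ∑' k : ℕ, -((q : ℂ) ^ k * (q : ℂ) ^ k / (1 - u * (q : ℂ) ^ k) ^ 2)

lemma abs_qpow (hq0 : 0 < q) (k : ℕ) : ‖(q : ℂ) ^ k‖ = q ^ k := by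
  rw [← Complex.ofReal_pow, Complex.norm_real, Real.norm_eq_abs, abs_of_pos (by positivity)]

lemma factor_lb (hq0 : 0 < q) (hq1 : q < 1) {r : ℝ} (hr1 : r < 1) {y : ℂ}
    (hy : ‖y‖ < r) (k : ℕ) : 1 - r ≤ ‖1 - y * (q : ℂ) ^ k‖ := by
  have h1 : ‖y * (q : ℂ) ^ k‖ ≤ r := by
    rw [norm_mul, abs_qpow hq0]
    calc ‖y‖ * q ^ k ≤ r * 1 := by
          apply mul_le_mul hy.le (pow_le_one₀ hq0.le hq1.le) (by positivity)
            (le_trans (norm_nonneg y) hy.le)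
      _ = r := mul_one r
  calc (1:ℝ) - r ≤ 1 - ‖y * (q:ℂ) ^ k‖ := by linarith
    _ ≤ ‖1 - y * (q:ℂ) ^ k‖ := by
        have := norm_sub_norm_le (1:ℂ) (y * (q:ℂ) ^ k)
        simpa using this

lemma factor_ne (hq0 : 0 < q) (hq1 : q < 1) {r : ℝ} (hr1 : r < 1) {y : ℂ}
    (hy : ‖y‖ < r) (k : ℕ) : 1 - y * (q : ℂ) ^ k ≠ 0 := by
  intro h
  have := factor_lb hq0 hq1 hr1 hy k
  rw [h] at this; simp at this; linarith

lemma factor_slit (hq0 : 0 < q) (hq1 : q < 1) {r : ℝ} (hr1 : r < 1) {y : ℂ}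
    (hy : ‖y‖ < r) (k : ℕ) : 1 - y * (q : ℂ) ^ k ∈ Complex.slitPlane := by
  left
  have h1 : ‖y * (q:ℂ) ^ k‖ ≤ r := by
    rw [norm_mul, abs_qpow hq0]
    calc ‖y‖ * q ^ k ≤ r * 1 := by
          apply mul_le_mul hy.le (pow_le_one₀ hq0.le hq1.le) (by positivity)
            (le_trans (norm_nonneg y) hy.le)
      _ = r := mul_one r
  have h2 : (y * (q:ℂ) ^ k).re ≤ r := le_trans (Complex.re_le_norm _) h1
  have : (1 - y * (q:ℂ) ^ k).re = 1 - (y * (q:ℂ) ^ k).re := by simp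
  rw [this]; linarith

lemma hasDerivAt_term (hq0 : 0 < q) (hq1 : q < 1) {r : ℝ} (hr1 : r < 1) {y : ℂ}
    (hy : ‖y‖ < r) (k : ℕ) :
    HasDerivAt (fun v => Complex.log (1 - v * (q : ℂ) ^ k))
      (-((q : ℂ) ^ k / (1 - y * (q : ℂ) ^ k))) y := by
  have hb : HasDerivAt (fun v : ℂ => 1 - v * (q : ℂ) ^ k) (-((q : ℂ) ^ k)) y := by
    simpa using ((hasDerivAt_id y).mul_const ((q:ℂ) ^ k)).const_sub 1
  have := hb.clog (factor_slit hq0 hq1 hr1 hy k)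
  simpa [neg_div] using this

lemma hasDerivAt_Lf (hq0 : 0 < q) (hq1 : q < 1) {r : ℝ} (hr0 : 0 < r) (hr1 : r < 1) {u : ℂ}
    (hu : ‖u‖ < r) : HasDerivAt (Lf q) (Nf q u) u := by
  apply hasDerivAt_tsum_of_isPreconnected
    (u := fun k : ℕ => q ^ k / (1 - r)) (t := Metric.ball (0:ℂ) r)
    (g' := fun k y => -((q : ℂ) ^ k / (1 - y * (q : ℂ) ^ k)))
    (y₀ := 0)
  · exact (summable_geometric_of_lt_one hq0.le hq1).div_const _
  · exact Metric.isOpen_ball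
  · exact (convex_ball _ _).isPreconnected
  · intro k y hy
    simp only [Metric.mem_ball, dist_zero_right] at hy
    exact hasDerivAt_term hq0 hq1 hr1 hy k
  · intro k y hy
    simp only [Metric.mem_ball, dist_zero_right] at hy
    rw [norm_neg, norm_div]
    have h1 := factor_lb hq0 hq1 hr1 hy k
    have h2 : (0:ℝ) < 1 - r := by linarith
    rw [abs_qpow hq0]
    exact div_le_div_of_nonneg_left (by positivity) h2 h1
  · simpa using hr0
  · simp only [zero_mul, sub_zero, Complex.log_one]; exact summable_zero
  · simpa using hu

lemma hasDerivAt_Nf (hq0 : 0 < q) (hq1 : q < 1) {r : ℝ} (hr0 : 0 < r) (hr1 : r < 1) {u : ℂ}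
    (hu : ‖u‖ < r) : HasDerivAt (Nf q) (Nf' q u) u := by
  apply hasDerivAt_tsum_of_isPreconnected
    (u := fun k : ℕ => q ^ k / (1 - r) ^ 2) (t := Metric.ball (0:ℂ) r)
    (g' := fun k y => -((q : ℂ) ^ k * (q : ℂ) ^ k / (1 - y * (q : ℂ) ^ k) ^ 2))
    (y₀ := 0)
  · exact (summable_geometric_of_lt_one hq0.le hq1).div_const _
  · exact Metric.isOpen_ball
  · exact (convex_ball _ _).isPreconnected
  · intro k y hy
    simp only [Metric.mem_ball, dist_zero_right] at hy
    have hb : HasDerivAt (fun v : ℂ => 1 - v * (q : ℂ) ^ k) (-((q : ℂ) ^ k)) y := by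
      simpa using ((hasDerivAt_id y).mul_const ((q:ℂ) ^ k)).const_sub 1
    have hne := factor_ne hq0 hq1 hr1 hy k
    have := ((hasDerivAt_const y ((q:ℂ) ^ k)).div hb hne).neg
    convert this using 1
    · rfl
    · ring
  · intro k y hy
    simp only [Metric.mem_ball, dist_zero_right] at hy
    rw [norm_neg, norm_div, norm_mul]
    have h1 := factor_lb hq0 hq1 hr1 hy k
    have h2 : (0:ℝ) < 1 - r := by linarith
    rw [abs_qpow hq0]
    have hpow : ‖(1 - y * (q:ℂ) ^ k) ^ 2‖ = ‖1 - y * (q:ℂ)^k‖ ^ 2 := by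
      exact norm_pow _ 2
    rw [hpow]
    calc q ^ k * q ^ k / ‖1 - y * (q:ℂ)^k‖ ^ 2
        ≤ q ^ k * 1 / (1 - r) ^ 2 := by
          apply div_le_div₀ (by positivity)
            (by nlinarith [pow_pos hq0 k, pow_le_one₀ hq0.le hq1.le (n := k), pow_pos hq0 k])
            (by positivity)
          nlinarith [h1, h2]
      _ = q ^ k / (1 - r) ^ 2 := by ring
  · simpa using hr0
  · apply summable_geom_bound hq0 hq1 (C := 1)
    intro k
    simp only [zero_mul, sub_zero, div_one, norm_neg, one_mul, abs_qpow hq0]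
    exact le_refl _
  · simpa using hu

end G0A
namespace G0B
open Complex Real Filter G0A

variable {q θ : ℝ}

noncomputable def Mf (q : ℝ) (z : ℂ) : ℂ :=
  (1 - z) * (Real.log (1 - q) : ℂ) + Lf q (q : ℂ) - Lf q ((q : ℂ) ^ z)

noncomputable def Mf' (q : ℝ) (z : ℂ) : ℂ :=
  -(Real.log (1 - q) : ℂ) - Nf q ((q : ℂ) ^ z) * ((q : ℂ) ^ z * (Real.log q : ℂ))

section
variable (hq0 : 0 < q) (hq1 : q < 1) (hθ : 0 < θ)

/-- the strip -/
def Sset (θ : ℝ) : Set ℂ := {z : ℂ | θ / 2 < z.re}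

lemma isOpen_Sset : IsOpen (Sset θ) := isOpen_lt continuous_const Complex.continuous_re

include hq0 hq1 hθ in
lemma abs_qz_lt {z : ℂ} (hz : z ∈ Sset θ) :
    ‖(q : ℂ) ^ z‖ < q ^ (θ / 2 : ℝ) := by
  rw [Complex.norm_cpow_eq_rpow_re_of_pos hq0]
  exact Real.rpow_lt_rpow_of_exponent_gt hq0 hq1 hz

include hq0 hq1 hθ in
lemma rlt1 : q ^ (θ / 2 : ℝ) < 1 :=
  Real.rpow_lt_one hq0.le hq1 (by linarith)

include hq0 in
lemma rpos : 0 < q ^ (θ / 2 : ℝ) := Real.rpow_pos_of_pos hq0 _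

include hq0 hq1 in
lemma qfact_ne (k : ℕ) : 1 - (q : ℂ) * (q : ℂ) ^ k ≠ 0 := by
  have : (1 : ℂ) - (q : ℂ) * (q : ℂ) ^ k = ((1 - q * q ^ k : ℝ) : ℂ) := by push_cast; ring
  rw [this]
  simp only [ne_eq, Complex.ofReal_eq_zero]
  have : q * q ^ k ≤ q * 1 := by
    apply mul_le_mul_of_nonneg_left (pow_le_one₀ hq0.le hq1.le) hq0.le
  nlinarith

include hq0 hq1 hθ in
lemma qGamma_eq_exp {z : ℂ} (hz : z ∈ Sset θ) : qGamma q z = Complex.exp (Mf q z) := by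
  have h1q : (0:ℝ) < 1 - q := by linarith
  have hpoch1 : qPoch (q : ℂ) (q : ℂ) = Complex.exp (Lf q (q:ℂ)) :=
    qPoch_eq_exp hq0 hq1 _ (qfact_ne hq0 hq1)
  have hpoch2 : qPoch ((q : ℂ) ^ z) (q : ℂ) = Complex.exp (Lf q ((q:ℂ) ^ z)) := by
    apply qPoch_eq_exp hq0 hq1
    exact fun k => factor_ne hq0 hq1 (rlt1 hq0 hq1 hθ) (abs_qz_lt hq0 hq1 hθ hz) k
  have hcpow : ((1 - q : ℂ)) ^ ((1:ℂ) - z)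
      = Complex.exp ((1 - z) * (Real.log (1 - q) : ℂ)) := by
    rw [Complex.cpow_def_of_ne_zero (by
      simp only [ne_eq]
      intro h
      have : (1 - q : ℂ) = ((1 - q : ℝ) : ℂ) := by push_cast; ring
      rw [this] at h
      simp only [Complex.ofReal_eq_zero] at h
      linarith)]
    have : (1 - q : ℂ) = ((1 - q : ℝ) : ℂ) := by push_cast; ring
    rw [this, ← Complex.ofReal_log h1q.le]
    push_cast
    ring_nf
  rw [qGamma, hpoch1, hpoch2, hcpow, ← Complex.exp_add, ← Complex.exp_sub, Mf]

include hq0 hq1 hθ in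
lemma hasDerivAt_Mf {z : ℂ} (hz : z ∈ Sset θ) : HasDerivAt (Mf q) (Mf' q z) z := by
  have hc : HasDerivAt (fun w : ℂ => (q : ℂ) ^ w) ((q : ℂ) ^ z * Complex.log (q : ℂ)) z :=
    (hasStrictDerivAt_const_cpow (Or.inl (by
      simp only [ne_eq, Complex.ofReal_eq_zero]; linarith))).hasDerivAt
  have hL : HasDerivAt (Lf q) (Nf q ((q:ℂ) ^ z)) ((q:ℂ) ^ z) :=
    hasDerivAt_Lf hq0 hq1 (rpos hq0 (θ := θ)) (rlt1 hq0 hq1 hθ) (abs_qz_lt hq0 hq1 hθ hz)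
  have hcomp : HasDerivAt (fun w => Lf q ((q:ℂ) ^ w))
      (Nf q ((q:ℂ) ^ z) * ((q:ℂ) ^ z * Complex.log (q:ℂ))) z := hL.comp z hc
  have h1 : HasDerivAt (fun w : ℂ => (1 - w) * (Real.log (1 - q) : ℂ) + Lf q (q:ℂ))
      (-(Real.log (1 - q) : ℂ)) z := by
    have := (((hasDerivAt_id z).const_sub 1).mul_const ((Real.log (1 - q) : ℂ))).add_const
      (Lf q (q:ℂ))
    simpa using this
  have := h1.sub hcomp
  have hlogq : Complex.log (q : ℂ) = ((Real.log q : ℝ) : ℂ) := (Complex.ofReal_log hq0.le).symm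
  rw [hlogq] at this
  exact this

include hq0 hq1 hθ in
lemma qGamma_ne_zero {z : ℂ} (hz : z ∈ Sset θ) : qGamma q z ≠ 0 := by
  rw [qGamma_eq_exp hq0 hq1 hθ hz]; exact Complex.exp_ne_zero _

include hq0 hq1 hθ in
lemma continuousAt_qGamma {z : ℂ} (hz : z ∈ Sset θ) : ContinuousAt (qGamma q) z := by
  have : qGamma q =ᶠ[nhds z] (fun w => Complex.exp (Mf q w)) := by
    filter_upwards [(isOpen_Sset).mem_nhds hz] with w hw
    exact qGamma_eq_exp hq0 hq1 hθ hw
  rw [continuousAt_congr this]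
  exact ((hasDerivAt_Mf hq0 hq1 hθ hz).cexp).continuousAt

include hq0 hq1 hθ in
lemma qDigamma_eq {z : ℂ} (hz : z ∈ Sset θ) (hslit : qGamma q z ∈ Complex.slitPlane) :
    qDigamma q z = Mf' q z := by
  have heq : (fun w => Complex.log (qGamma q w)) =ᶠ[nhds z]
      (fun w => Complex.log (Complex.exp (Mf q w))) := by
    filter_upwards [(isOpen_Sset).mem_nhds hz] with w hw
    rw [qGamma_eq_exp hq0 hq1 hθ hw]
  have hslit' : Complex.exp (Mf q z) ∈ Complex.slitPlane := by
    rw [← qGamma_eq_exp hq0 hq1 hθ hz]; exact hslit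
  have hd : HasDerivAt (fun w => Complex.log (Complex.exp (Mf q w)))
      (Complex.exp (Mf q z) * Mf' q z / Complex.exp (Mf q z)) z :=
    ((hasDerivAt_Mf hq0 hq1 hθ hz).cexp).clog hslit'
  rw [qDigamma, heq.deriv_eq, hd.deriv]
  field_simp

end
end G0B
namespace G0B
open Complex Real Filter G0A

variable {q θ α : ℝ}

section
variable (hq0 : 0 < q) (hq1 : q < 1) (hθ : 0 < θ)

include hq0 in
lemma log_ofReal_im {t : ℝ} (ht : 0 ≤ t) : (Complex.log ((t : ℝ) : ℂ)).im = 0 := by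
  rw [Complex.log_im]
  exact Complex.arg_ofReal_of_nonneg ht

include hq0 hq1 in
lemma denom_pos {x : ℝ} (hx0 : 0 ≤ x) (hx1 : x < 1) (k : ℕ) : 0 < 1 - x * q ^ k := by
  have : x * q ^ k ≤ x * 1 := mul_le_mul_of_nonneg_left (pow_le_one₀ hq0.le hq1.le) hx0
  nlinarith

include hq0 hq1 in
lemma Nf_ofReal {x : ℝ} (hx0 : 0 ≤ x) (hx1 : x < 1) :
    Nf q ((x : ℝ) : ℂ) = ((-∑' k : ℕ, q ^ k / (1 - x * q ^ k) : ℝ) : ℂ) := by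
  rw [Nf]
  have h : ∀ k : ℕ, -((q:ℂ) ^ k / (1 - (x:ℂ) * (q:ℂ) ^ k))
      = (((-(q ^ k / (1 - x * q ^ k)) : ℝ)) : ℂ) := by
    intro k; push_cast; ring
  rw [tsum_congr h, ← Complex.ofReal_tsum, tsum_neg]

include hq0 hq1 in
lemma Nf'_ofReal {x : ℝ} (hx0 : 0 ≤ x) (hx1 : x < 1) :
    Nf' q ((x : ℝ) : ℂ) = ((-∑' k : ℕ, q ^ k * q ^ k / (1 - x * q ^ k) ^ 2 : ℝ) : ℂ) := by
  rw [Nf']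
  have h : ∀ k : ℕ, -((q:ℂ) ^ k * (q:ℂ) ^ k / (1 - (x:ℂ) * (q:ℂ) ^ k) ^ 2)
      = (((-(q ^ k * q ^ k / (1 - x * q ^ k) ^ 2) : ℝ)) : ℂ) := by
    intro k; push_cast; ring
  rw [tsum_congr h, ← Complex.ofReal_tsum, tsum_neg]

include hq0 hq1 in
lemma summable_inv_denom {x : ℝ} (hx0 : 0 ≤ x) (hx1 : x < 1) (m : ℕ) :
    Summable (fun k : ℕ => q ^ k / (1 - x * q ^ k) ^ m) := by
  apply summable_geom_bound hq0 hq1 (C := 1 / (1 - x) ^ m)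
  intro k
  have h1 := denom_pos hq0 hq1 hx0 hx1 k
  have h2 : 1 - x ≤ 1 - x * q ^ k := by
    have : x * q ^ k ≤ x * 1 := mul_le_mul_of_nonneg_left (pow_le_one₀ hq0.le hq1.le) hx0
    linarith
  have h3 : (0:ℝ) < 1 - x := by linarith
  rw [Real.norm_eq_abs, abs_of_pos (by positivity), one_div, inv_mul_eq_div,
    div_le_div_iff₀ (by positivity) (by positivity)]
  apply mul_le_mul_of_nonneg_left (pow_le_pow_left₀ (by linarith) h2 m) (by positivity)

include hq0 hq1 hθ in
lemma Mf_im_real {x : ℝ} (hx : 0 < x) : (Mf q ((x : ℝ) : ℂ)).im = 0 := by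
  have hqx1 : q ^ (x:ℝ) < 1 := Real.rpow_lt_one hq0.le hq1 hx
  have hqx0 : (0:ℝ) ≤ q ^ (x:ℝ) := (Real.rpow_pos_of_pos hq0 x).le
  have hcast : (q : ℂ) ^ ((x : ℝ) : ℂ) = ((q ^ (x:ℝ) : ℝ) : ℂ) :=
    (Complex.ofReal_cpow hq0.le x).symm
  rw [Mf, hcast]
  have him : ∀ (t : ℝ), 0 ≤ t → t < 1 → (Lf q ((t:ℝ):ℂ)).im = 0 := by
    intro t ht0 ht1
    rw [Lf, Complex.im_tsum (summable_log hq0 hq1 _)]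
    have : ∀ k : ℕ, (Complex.log (1 - (t:ℝ) * (q:ℂ) ^ k)).im = 0 := by
      intro k
      have : (1 : ℂ) - (t:ℝ) * (q:ℂ) ^ k = ((1 - t * q ^ k : ℝ) : ℂ) := by push_cast; ring
      rw [this]
      exact log_ofReal_im hq0 (denom_pos hq0 hq1 ht0 ht1 k).le
    simp [this]
  simp only [Complex.add_im, Complex.sub_im, Complex.mul_im]
  rw [him q hq0.le hq1, him _ hqx0 hqx1]
  simp

include hq0 hq1 hθ in
lemma qGamma_slit_real {x : ℝ} (hx : 0 < x) (hxS : ((x:ℝ):ℂ) ∈ Sset θ) :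
    qGamma q ((x : ℝ) : ℂ) ∈ Complex.slitPlane := by
  rw [qGamma_eq_exp hq0 hq1 hθ hxS]
  left
  rw [Complex.exp_re, Mf_im_real hq0 hq1 hθ hx]
  simp [Real.exp_pos]

end
end G0B
namespace G0B
open Complex Real Filter G0A

variable {q θ α : ℝ}

section
variable (hq0 : 0 < q) (hq1 : q < 1) (hθ : 0 < θ)

include hθ in
lemma theta_mem_S : ((θ : ℝ) : ℂ) ∈ Sset θ := by
  simp only [Sset, Set.mem_setOf_eq, Complex.ofReal_re]; linarith

include hq0 hq1 hθ in
lemma abs_u0_lt : ‖(((q ^ θ : ℝ) : ℝ) : ℂ)‖ < q ^ (θ / 2 : ℝ) := by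
  rw [Complex.norm_real, Real.norm_eq_abs, abs_of_pos (Real.rpow_pos_of_pos hq0 θ)]
  exact Real.rpow_lt_rpow_of_exponent_gt hq0 hq1 (by linarith)

include hq0 hq1 hθ in
lemma hasDerivAt_Mf' :
    HasDerivAt (Mf' q)
      (-(((Real.log q : ℂ)) ^ 2 * ((q ^ θ : ℝ) : ℂ)) *
        (Nf q ((q ^ θ : ℝ) : ℂ) + ((q ^ θ : ℝ) : ℂ) * Nf' q ((q ^ θ : ℝ) : ℂ))) (θ : ℂ) := by
  set u₀ : ℂ := ((q ^ θ : ℝ) : ℂ) with hu₀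
  set ℓ : ℂ := ((Real.log q : ℝ) : ℂ) with hℓ
  have hqne : (q : ℂ) ≠ 0 := by simp only [ne_eq, Complex.ofReal_eq_zero]; linarith
  have hcast : (q : ℂ) ^ ((θ : ℝ) : ℂ) = u₀ := (Complex.ofReal_cpow hq0.le θ).symm
  have hlogq : Complex.log (q : ℂ) = ℓ := (Complex.ofReal_log hq0.le).symm
  have hc : HasDerivAt (fun w : ℂ => (q : ℂ) ^ w) (u₀ * ℓ) (θ : ℂ) := by
    have := (hasStrictDerivAt_const_cpow (x := (q:ℂ)) (y := ((θ:ℝ):ℂ)) (Or.inl hqne)).hasDerivAt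
    rwa [hcast, hlogq] at this
  have hN : HasDerivAt (Nf q) (Nf' q u₀) u₀ :=
    hasDerivAt_Nf hq0 hq1 (rpos hq0 (θ := θ)) (rlt1 hq0 hq1 hθ) (abs_u0_lt hq0 hq1 hθ)
  have hN2 : HasDerivAt (Nf q) (Nf' q u₀) ((q : ℂ) ^ ((θ:ℝ):ℂ)) := by rw [hcast]; exact hN
  have hcomp : HasDerivAt (fun w => Nf q ((q : ℂ) ^ w)) (Nf' q u₀ * (u₀ * ℓ)) (θ : ℂ) :=
    hN2.comp ((θ:ℝ):ℂ) hc
  have hg : HasDerivAt (fun w : ℂ => (q : ℂ) ^ w * ℓ) ((u₀ * ℓ) * ℓ) (θ : ℂ) :=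
    hc.mul_const ℓ
  have hprod := hcomp.mul hg
  rw [hcast] at hprod
  have := hprod.const_sub (-(Real.log (1 - q) : ℂ))
  have heq : (fun z => -(Real.log (1 - q) : ℂ) - Nf q ((q:ℂ) ^ z) * ((q:ℂ) ^ z * ℓ)) = Mf' q := by
    funext z; rw [Mf']
  rw [← heq]
  exact this.congr_deriv (by ring)

include hq0 hq1 hθ in
lemma deriv_qDigamma_theta :
    deriv (qDigamma q) (θ : ℂ)
      = -(((Real.log q : ℂ)) ^ 2 * ((q ^ θ : ℝ) : ℂ)) *
        (Nf q ((q ^ θ : ℝ) : ℂ) + ((q ^ θ : ℝ) : ℂ) * Nf' q ((q ^ θ : ℝ) : ℂ)) := by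
  have hslit : qGamma q ((θ:ℝ):ℂ) ∈ Complex.slitPlane :=
    qGamma_slit_real hq0 hq1 hθ hθ (theta_mem_S hθ)
  have hU : {z : ℂ | z ∈ Sset θ ∧ qGamma q z ∈ Complex.slitPlane} ∈ nhds ((θ:ℝ):ℂ) := by
    apply Filter.inter_mem ((isOpen_Sset).mem_nhds (theta_mem_S hθ))
    exact (continuousAt_qGamma hq0 hq1 hθ (theta_mem_S hθ)).preimage_mem_nhds
      (Complex.isOpen_slitPlane.mem_nhds hslit)
  have heq : qDigamma q =ᶠ[nhds ((θ:ℝ):ℂ)] Mf' q := by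
    filter_upwards [hU] with z hz
    exact qDigamma_eq hq0 hq1 hθ hz.1 hz.2
  rw [heq.deriv_eq]
  exact (hasDerivAt_Mf' hq0 hq1 hθ).deriv

include hq0 hq1 in
lemma summable_sq_denom {x : ℝ} (hx0 : 0 ≤ x) (hx1 : x < 1) :
    Summable (fun k : ℕ => q ^ k * q ^ k / (1 - x * q ^ k) ^ 2) := by
  apply summable_geom_bound hq0 hq1 (C := 1 / (1 - x) ^ 2)
  intro k
  have h1 := denom_pos hq0 hq1 hx0 hx1 k
  have h2 : 1 - x ≤ 1 - x * q ^ k := by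
    have : x * q ^ k ≤ x * 1 := mul_le_mul_of_nonneg_left (pow_le_one₀ hq0.le hq1.le) hx0
    linarith
  have h3 : (0:ℝ) < 1 - x := by linarith
  rw [Real.norm_eq_abs, abs_of_pos (by positivity), one_div, inv_mul_eq_div,
    div_le_div_iff₀ (by positivity) (by positivity)]
  calc q ^ k * q ^ k * (1 - x) ^ 2 ≤ q ^ k * 1 * (1 - x * q ^ k) ^ 2 := by
        apply mul_le_mul
        · exact mul_le_mul_of_nonneg_left (pow_le_one₀ hq0.le hq1.le) (by positivity)
        · exact pow_le_pow_left₀ h3.le h2 2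
        · positivity
        · positivity
    _ = q ^ k * (1 - x * q ^ k) ^ 2 := by ring

include hq0 hq1 in
lemma kappa_sum_eq {x : ℝ} (hx0 : 0 ≤ x) (hx1 : x < 1) :
    Nf q ((x : ℝ) : ℂ) + ((x : ℝ) : ℂ) * Nf' q ((x : ℝ) : ℂ)
      = ((-∑' k : ℕ, q ^ k / (1 - x * q ^ k) ^ 2 : ℝ) : ℂ) := by
  rw [Nf_ofReal hq0 hq1 hx0 hx1, Nf'_ofReal hq0 hq1 hx0 hx1]
  have : ((x:ℝ):ℂ) * ((-∑' k : ℕ, q ^ k * q ^ k / (1 - x * q ^ k) ^ 2 : ℝ) : ℂ)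
      = ((x * -∑' k : ℕ, q ^ k * q ^ k / (1 - x * q ^ k) ^ 2 : ℝ) : ℂ) := by push_cast; ring
  rw [this, ← Complex.ofReal_add]
  congr 1
  rw [mul_neg, ← tsum_mul_left, ← neg_add, neg_inj]
  have s1 : Summable (fun k : ℕ => q ^ k / (1 - x * q ^ k)) := by
    simpa using summable_inv_denom hq0 hq1 hx0 hx1 1
  have s2 : Summable (fun k : ℕ => x * (q ^ k * q ^ k / (1 - x * q ^ k) ^ 2)) :=
    (summable_sq_denom hq0 hq1 hx0 hx1).mul_left x
  rw [← Summable.tsum_add s1 s2]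
  apply tsum_congr
  intro k
  have h1 := (denom_pos hq0 hq1 hx0 hx1 k).ne'
  field_simp
  ring

include hq0 hq1 in
lemma logq_ne : ((Real.log q : ℝ) : ℂ) ≠ 0 := by
  simp only [ne_eq, Complex.ofReal_eq_zero]
  exact (Real.log_neg hq0 hq1).ne

include hq0 hq1 hθ in
lemma kappaC_eq :
    kappaC q θ = ((∑' k : ℕ, q ^ k / (1 - q ^ θ * q ^ k) ^ 2 : ℝ) : ℂ) := by
  have hx0 : (0:ℝ) ≤ q ^ θ := (Real.rpow_pos_of_pos hq0 θ).le
  have hx1 : q ^ θ < 1 := Real.rpow_lt_one hq0.le hq1 hθ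
  have hu : (((q ^ θ : ℝ)) : ℂ) ≠ 0 := by
    simp only [ne_eq, Complex.ofReal_eq_zero]
    exact (Real.rpow_pos_of_pos hq0 θ).ne'
  rw [kappaC, deriv_qDigamma_theta hq0 hq1 hθ, kappa_sum_eq hq0 hq1 hx0 hx1,
    ← Complex.ofReal_cpow hq0.le]
  rw [div_eq_iff (by
    apply mul_ne_zero (pow_ne_zero 2 (logq_ne hq0 hq1)) hu)]
  push_cast
  ring

include hq0 hq1 hθ in
lemma A_gt (hα0 : 0 < α) (hα : α < q ^ θ) : θ < Aq q α := by
  have hlogq : Real.log q < 0 := Real.log_neg hq0 hq1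
  have h1 : Real.log α < θ * Real.log q := by
    have := Real.log_lt_log hα0 hα
    rwa [Real.log_rpow hq0] at this
  rw [Aq, lt_div_iff_of_neg hlogq]
  linarith

include hq0 hq1 in
lemma q_pow_A (hα0 : 0 < α) : q ^ (Aq q α : ℝ) = α := by
  have : Aq q α = Real.logb q α := rfl
  rw [this]
  exact Real.rpow_logb hq0 hq1.ne hα0

include hq0 hq1 hθ in
lemma qDigammaA_eq (hα0 : 0 < α) (hα : α < q ^ θ) :
    qDigamma q ((Aq q α : ℝ) : ℂ)
      = -(Real.log (1 - q) : ℂ) - Nf q ((α : ℝ) : ℂ) * (((α : ℝ) : ℂ) * (Real.log q : ℂ)) := by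
  have hA := A_gt hq0 hq1 hθ hα0 hα
  have hAS : ((Aq q α : ℝ) : ℂ) ∈ Sset θ := by
    simp only [Sset, Set.mem_setOf_eq, Complex.ofReal_re]; linarith
  have hApos : 0 < Aq q α := by linarith
  have hslit := qGamma_slit_real hq0 hq1 hθ hApos hAS
  rw [qDigamma_eq hq0 hq1 hθ hAS hslit, Mf', ← Complex.ofReal_cpow hq0.le,
    q_pow_A hq0 hq1 hα0]

include hq0 hq1 hθ in
lemma gC_eq (hα0 : 0 < α) (hα : α < q ^ θ) :
    gC q θ α = ((α * (∑' k : ℕ, q ^ k / (1 - q ^ θ * q ^ k) ^ 2)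
      - ∑' k : ℕ, α * q ^ k / (1 - α * q ^ k) : ℝ) : ℂ) := by
  have hα1 : α < 1 := lt_trans hα (Real.rpow_lt_one hq0.le hq1 hθ)
  have hx0 : (0:ℝ) ≤ q ^ θ := (Real.rpow_pos_of_pos hq0 θ).le
  have hx1 : q ^ θ < 1 := Real.rpow_lt_one hq0.le hq1 hθ
  have hu : (((q ^ θ : ℝ)) : ℂ) ≠ 0 := by
    simp only [ne_eq, Complex.ofReal_eq_zero]
    exact (Real.rpow_pos_of_pos hq0 θ).ne'
  have hℓ := logq_ne hq0 hq1
  have hB : ((α:ℝ):ℂ) * Nf q ((α : ℝ) : ℂ)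
      = ((-∑' k : ℕ, α * q ^ k / (1 - α * q ^ k) : ℝ) : ℂ) := by
    rw [Nf_ofReal hq0 hq1 hα0.le hα1, ← Complex.ofReal_mul]
    congr 1
    rw [mul_neg, ← tsum_mul_left, neg_inj]
    apply tsum_congr
    intro k
    exact (mul_div_assoc α _ _).symm
  have hNα : Nf q ((α : ℝ) : ℂ) * (((α : ℝ) : ℂ) * (Real.log q : ℂ))
      = -((∑' k : ℕ, α * q ^ k / (1 - α * q ^ k) : ℝ) : ℂ) * (Real.log q : ℂ) := by
    rw [show Nf q ((α : ℝ) : ℂ) * (((α : ℝ) : ℂ) * (Real.log q : ℂ))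
        = (((α:ℝ):ℂ) * Nf q ((α : ℝ) : ℂ)) * (Real.log q : ℂ) by ring, hB,
      Complex.ofReal_neg]
  rw [gC, deriv_qDigamma_theta hq0 hq1 hθ, kappa_sum_eq hq0 hq1 hx0 hx1,
    qDigammaA_eq hq0 hq1 hθ hα0 hα, hNα, ← Complex.ofReal_cpow hq0.le,
    Complex.ofReal_neg, Complex.ofReal_sub, Complex.ofReal_mul]
  field_simp
  ring

end
end G0B
namespace G0C
open Complex Real Filter G0A G0B

noncomputable def eC : ℂ := Complex.exp (Complex.I * (Real.pi / 4))
noncomputable def cR : ℝ := Real.sqrt 2 / 2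
noncomputable def wC (α : ℝ) (s : ℝ) : ℂ := (α : ℂ) + (s : ℂ) * eC

lemma cR_pos : 0 < cR := by
  rw [cR]; positivity

lemma eC_re : eC.re = cR := by
  rw [eC, mul_comm, Complex.exp_mul_I]
  have : (Real.pi / 4 : ℂ) = ((Real.pi / 4 : ℝ) : ℂ) := by push_cast; ring
  rw [this, ← Complex.ofReal_cos, ← Complex.ofReal_sin]
  simp [Real.cos_pi_div_four, cR]

lemma eC_im : eC.im = cR := by
  rw [eC, mul_comm, Complex.exp_mul_I]
  have : (Real.pi / 4 : ℂ) = ((Real.pi / 4 : ℝ) : ℂ) := by push_cast; ring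
  rw [this, ← Complex.ofReal_cos, ← Complex.ofReal_sin]
  simp [Real.sin_pi_div_four, cR]

lemma abs_eC : ‖eC‖ = 1 := by
  rw [eC, Complex.norm_exp]
  have : (Complex.I * (Real.pi / 4)).re = 0 := by simp
  rw [this, Real.exp_zero]

lemma wC_re (α s : ℝ) : (wC α s).re = α + s * cR := by
  simp [wC, Complex.add_re, Complex.mul_re, eC_re, eC_im]

lemma wC_im (α s : ℝ) : (wC α s).im = s * cR := by
  simp [wC, Complex.add_im, Complex.mul_im, eC_re, eC_im]

variable {q θ α : ℝ}

lemma wC_ne {s : ℝ} (hs : 0 < s) : wC α s ≠ 0 := by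
  intro h
  have h1 := wC_im α s
  rw [h] at h1
  simp only [Complex.zero_im] at h1
  nlinarith [cR_pos]

lemma wC_slit {s : ℝ} (hs : 0 < s) : wC α s ∈ Complex.slitPlane := by
  right
  rw [wC_im]
  nlinarith [cR_pos]

lemma wfact_im (hq0 : 0 < q) {s : ℝ} (k : ℕ) :
    (1 - wC α s * (q : ℂ) ^ k).im = -(s * cR * q ^ k) := by
  rw [Complex.sub_im, Complex.one_im,
    show ((q:ℂ) ^ k) = ((q ^ k : ℝ) : ℂ) from by push_cast; ring, Complex.mul_im]
  simp only [Complex.ofReal_re, Complex.ofReal_im, mul_zero, add_zero, wC_im]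
  ring

lemma wfact_ne (hq0 : 0 < q) {s : ℝ} (hs : 0 < s) (k : ℕ) :
    1 - wC α s * (q : ℂ) ^ k ≠ 0 := by
  intro h
  have h1 := wfact_im (α := α) hq0 (s := s) k
  rw [h] at h1
  simp only [Complex.zero_im] at h1
  have h2 : 0 < s * cR * q ^ k :=
    mul_pos (mul_pos hs cR_pos) (pow_pos hq0 k)
  linarith

lemma wfact_slit (hq0 : 0 < q) {s : ℝ} (hs : 0 < s) (k : ℕ) :
    1 - wC α s * (q : ℂ) ^ k ∈ Complex.slitPlane := by
  right
  rw [wfact_im hq0]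
  have h2 : 0 < s * cR * q ^ k :=
    mul_pos (mul_pos hs cR_pos) (pow_pos hq0 k)
  linarith

section
variable (hq0 : 0 < q) (hq1 : q < 1) (hθ : 0 < θ) (hα0 : 0 < α) (hα : α < q ^ θ)

include hq0 hq1 hθ hα0 hα in
lemma g0_re_eq {s : ℝ} (hs : 0 < s) :
    (g0 q θ α (WcA q α s)).re
      = -(α * (∑' k : ℕ, q ^ k / (1 - q ^ θ * q ^ k) ^ 2)
            - ∑' k : ℕ, α * q ^ k / (1 - α * q ^ k)) * Real.log (‖wC α s‖)
        + (∑' k : ℕ, q ^ k / (1 - q ^ θ * q ^ k) ^ 2) * (α + s * cR)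
        + ∑' k : ℕ, Real.log (‖1 - wC α s * (q : ℂ) ^ k‖) := by
  have hℓ := logq_ne hq0 hq1
  have hqC : (q : ℂ) ≠ 0 := by simp only [ne_eq, Complex.ofReal_eq_zero]; linarith
  have hW : WcA q α s = Complex.log (wC α s) / (Real.log q : ℂ) := rfl
  have h1 : (q : ℂ) ^ (WcA q α s) = wC α s := by
    rw [Complex.cpow_def_of_ne_zero hqC, hW, ← Complex.ofReal_log hq0.le,
      mul_div_cancel₀ _ hℓ, Complex.exp_log (wC_ne hs)]
  have h2 : -gC q θ α * (Real.log q : ℂ) * (WcA q α s) = -gC q θ α * Complex.log (wC α s) := by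
    rw [hW]
    field_simp
  rw [g0, h1, h2, gC_eq hq0 hq1 hθ hα0 hα, kappaC_eq hq0 hq1 hθ]
  rw [Complex.add_re, Complex.add_re]
  congr 1
  congr 1
  · have : (-((α * (∑' k : ℕ, q ^ k / (1 - q ^ θ * q ^ k) ^ 2)
        - ∑' k : ℕ, α * q ^ k / (1 - α * q ^ k) : ℝ) : ℂ)) * Complex.log (wC α s)
        = ((-(α * (∑' k : ℕ, q ^ k / (1 - q ^ θ * q ^ k) ^ 2)
            - ∑' k : ℕ, α * q ^ k / (1 - α * q ^ k) : ℝ) : ℝ) : ℂ) * Complex.log (wC α s) := by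
      push_cast; ring
    rw [this]
    simp only [Complex.mul_re, Complex.ofReal_re, Complex.ofReal_im, zero_mul, sub_zero]
    rw [Complex.log_re]
  · simp only [Complex.mul_re, Complex.ofReal_re, Complex.ofReal_im, zero_mul, sub_zero]
    rw [wC_re]
  · exact re_log_qPoch hq0 hq1 (wC α s) (wfact_ne hq0 hs)

end
end G0C
namespace G0C
open Complex Real Filter G0A G0B

variable {q θ α : ℝ}

lemma hasDerivAt_wC (α : ℝ) (s : ℝ) : HasDerivAt (fun u : ℝ => wC α u) eC s := by
  have h1 : HasDerivAt (fun u : ℝ => ((u : ℝ) : ℂ)) 1 s := by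
    simpa using (hasDerivAt_id s).ofReal_comp
  have := (h1.mul_const eC).const_add ((α : ℝ) : ℂ)
  simpa [wC] using this

lemma hasDerivAt_re_comp {f : ℝ → ℂ} {d : ℂ} {x : ℝ} (h : HasDerivAt f d x) :
    HasDerivAt (fun t => (f t).re) d.re x := by
  have := (Complex.reCLM.hasFDerivAt (x := f x)).comp_hasDerivAt x h
  exact this

lemma summable_re_log (hq0 : 0 < q) (hq1 : q < 1) (u : ℂ) :
    Summable (fun k : ℕ => (Complex.log (1 - u * (q : ℂ) ^ k)).re) :=
  ((summable_log hq0 hq1 u).hasSum.mapL Complex.reCLM).summable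

section
variable (hq0 : 0 < q) (hq1 : q < 1) (hα0 : 0 < α)

include hq0 hq1 hα0 in
lemma abs_wfact_lb {s y : ℝ} (hs : 0 < s) (hy1 : s / 2 ≤ y) (hy2 : y ≤ s + 1) (k : ℕ) :
    min (1/2 : ℝ) (s * cR / (4 * (α + s + 1))) ≤ ‖1 - wC α y * (q : ℂ) ^ k‖ := by
  have hy0 : 0 < y := lt_of_lt_of_le (by linarith) hy1
  have hM : ‖wC α y‖ ≤ α + s + 1 := by
    calc ‖wC α y‖ ≤ ‖((α : ℝ) : ℂ)‖ + ‖(y:ℝ) * eC‖ := by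
          apply norm_add_le
      _ = |α| + |y| * 1 := by rw [Complex.norm_real, Real.norm_eq_abs, norm_mul, Complex.norm_real, Real.norm_eq_abs, abs_eC]
      _ = α + y := by rw [abs_of_pos hα0, abs_of_pos hy0, mul_one]
      _ ≤ α + s + 1 := by linarith
  by_cases hcase : q ^ k * (α + s + 1) ≤ 1/2
  · have h1 : ‖wC α y * (q:ℂ) ^ k‖ ≤ 1/2 := by
      rw [norm_mul, abs_qpow hq0]
      calc ‖wC α y‖ * q ^ k ≤ (α + s + 1) * q ^ k := by
            apply mul_le_mul_of_nonneg_right hM (by positivity)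
        _ = q ^ k * (α + s + 1) := by ring
        _ ≤ 1/2 := hcase
    calc min (1/2 : ℝ) (s * cR / (4 * (α + s + 1))) ≤ 1/2 := min_le_left _ _
      _ ≤ 1 - ‖wC α y * (q:ℂ) ^ k‖ := by linarith
      _ ≤ ‖1 - wC α y * (q:ℂ) ^ k‖ := by
          have := norm_sub_norm_le (1:ℂ) (wC α y * (q:ℂ) ^ k)
          simpa using this
  · push_neg at hcase
    have hq4 : 1 / (2 * (α + s + 1)) < q ^ k := by
      rw [div_lt_iff₀ (by positivity)]
      calc (1:ℝ) = 2 * (1/2) := by norm_num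
        _ < 2 * (q ^ k * (α + s + 1)) := by linarith
        _ = q ^ k * (2 * (α + s + 1)) := by ring
    calc min (1/2 : ℝ) (s * cR / (4 * (α + s + 1))) ≤ s * cR / (4 * (α + s + 1)) :=
          min_le_right _ _
      _ ≤ y * cR * q ^ k := by
          rw [div_le_iff₀ (by positivity)]
          have e1 : 1 ≤ 2 * q ^ k * (α + s + 1) := by nlinarith
          have e2 : s * cR ≤ s * cR * (2 * q ^ k * (α + s + 1)) := by
            nlinarith [mul_pos hs cR_pos]
          have e3 : s * cR * (2 * q ^ k * (α + s + 1)) ≤ y * cR * q ^ k * (4 * (α + s + 1)) := by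
            nlinarith [mul_nonneg (mul_nonneg (mul_nonneg (sub_nonneg.mpr hy1) cR_pos.le)
              (pow_pos hq0 k).le) (by positivity : (0:ℝ) ≤ 4 * (α + s + 1))]
          linarith
      _ = |(1 - wC α y * (q:ℂ) ^ k).im| := by
          rw [wfact_im hq0, abs_neg, abs_of_pos (by
            exact mul_pos (mul_pos hy0 cR_pos) (pow_pos hq0 k))]
      _ ≤ ‖1 - wC α y * (q:ℂ) ^ k‖ := Complex.abs_im_le_norm _

include hq0 hq1 hα0 in
lemma delta_pos {s : ℝ} (hs : 0 < s) : 0 < min (1/2 : ℝ) (s * cR / (4 * (α + s + 1))) := by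
  apply lt_min (by norm_num)
  have := cR_pos
  positivity

include hq0 hq1 hα0 in
lemma hasDerivAt_logre_sum {s : ℝ} (hs : 0 < s) :
    HasDerivAt (fun u : ℝ => ∑' k : ℕ, (Complex.log (1 - wC α u * (q : ℂ) ^ k)).re)
      (∑' k : ℕ, (-(eC * (q : ℂ) ^ k) / (1 - wC α s * (q : ℂ) ^ k)).re) s := by
  set δ : ℝ := min (1/2 : ℝ) (s * cR / (4 * (α + s + 1))) with hδ
  have hδ0 : 0 < δ := delta_pos hq0 hq1 hα0 hs
  apply hasDerivAt_tsum_of_isPreconnected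
    (u := fun k : ℕ => q ^ k / δ) (t := Set.Ioo (s/2) (s+1))
    (g' := fun k y => (-(eC * (q : ℂ) ^ k) / (1 - wC α y * (q : ℂ) ^ k)).re)
    (y₀ := s)
  · exact (summable_geometric_of_lt_one hq0.le hq1).div_const _
  · exact isOpen_Ioo
  · exact (convex_Ioo _ _).isPreconnected
  · intro k y hy
    have hy0 : 0 < y := lt_trans (by linarith [hy.1]) hy.1
    have hbase : HasDerivAt (fun u : ℝ => 1 - wC α u * (q:ℂ) ^ k) (-(eC * (q:ℂ) ^ k)) y := by
      simpa using ((hasDerivAt_wC α y).mul_const ((q:ℂ) ^ k)).const_sub 1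
    exact hasDerivAt_re_comp (hbase.clog_real (wfact_slit hq0 hy0 k))
  · intro k y hy
    have hlb := abs_wfact_lb hq0 hq1 hα0 hs hy.1.le hy.2.le k
    rw [Real.norm_eq_abs]
    calc |(-(eC * (q:ℂ) ^ k) / (1 - wC α y * (q:ℂ) ^ k)).re|
        ≤ ‖-(eC * (q:ℂ) ^ k) / (1 - wC α y * (q:ℂ) ^ k)‖ :=
          Complex.abs_re_le_norm _
      _ = q ^ k / ‖1 - wC α y * (q:ℂ) ^ k‖ := by
          rw [norm_div, norm_neg, norm_mul, abs_eC, abs_qpow hq0, one_mul]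
      _ ≤ q ^ k / δ := by
          exact div_le_div_of_nonneg_left (pow_pos hq0 k).le hδ0 hlb
  · constructor <;> linarith
  · exact summable_re_log hq0 hq1 _
  · constructor <;> linarith

end
end G0C
namespace G0C
open Complex Real Filter G0A G0B

variable {q θ α : ℝ}

lemma cR_sq : cR ^ 2 = 1 / 2 := by
  rw [cR, div_pow, sq_sqrt (by norm_num : (2:ℝ) ≥ 0)]
  norm_num

lemma wfact_re (hq0 : 0 < q) {s : ℝ} (k : ℕ) :
    (1 - wC α s * (q : ℂ) ^ k).re = 1 - q ^ k * (α + s * cR) := by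
  rw [Complex.sub_re, Complex.one_re,
    show ((q:ℂ) ^ k) = ((q ^ k : ℝ) : ℂ) from by push_cast; ring, Complex.mul_re]
  simp only [Complex.ofReal_re, Complex.ofReal_im, mul_zero, sub_zero, wC_re]
  ring

section
variable (hq0 : 0 < q) (hq1 : q < 1) (hθ : 0 < θ) (hα0 : 0 < α) (hα : α < q ^ θ)

include hq0 hq1 hθ hα0 hα in
lemma hasDerivAt_main {s : ℝ} (hs : 0 < s) :
    HasDerivAt (fun u : ℝ => (g0 q θ α (WcA q α u)).re)
      (-(α * (∑' k : ℕ, q ^ k / (1 - q ^ θ * q ^ k) ^ 2)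
            - ∑' k : ℕ, α * q ^ k / (1 - α * q ^ k)) * (eC / wC α s).re
        + (∑' k : ℕ, q ^ k / (1 - q ^ θ * q ^ k) ^ 2) * cR
        + ∑' k : ℕ, (-(eC * (q : ℂ) ^ k) / (1 - wC α s * (q : ℂ) ^ k)).re) s := by
  set GR : ℝ := α * (∑' k : ℕ, q ^ k / (1 - q ^ θ * q ^ k) ^ 2)
      - ∑' k : ℕ, α * q ^ k / (1 - α * q ^ k) with hGR
  set KR : ℝ := ∑' k : ℕ, q ^ k / (1 - q ^ θ * q ^ k) ^ 2 with hKR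
  have h1 : HasDerivAt (fun u : ℝ => -GR * Real.log (‖wC α u‖))
      (-GR * (eC / wC α s).re) s := by
    have hlog : HasDerivAt (fun u : ℝ => (Complex.log (wC α u)).re) ((eC / wC α s).re) s :=
      hasDerivAt_re_comp ((hasDerivAt_wC α s).clog_real (wC_slit hs))
    have hfun : (fun u : ℝ => (Complex.log (wC α u)).re)
        = (fun u : ℝ => Real.log (‖wC α u‖)) :=
      funext fun u => Complex.log_re _
    rw [hfun] at hlog
    exact hlog.const_mul (-GR)
  have h2 : HasDerivAt (fun u : ℝ => KR * (α + u * cR)) (KR * cR) s := by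
    have := (((hasDerivAt_id s).mul_const cR).const_add α).const_mul KR
    simpa using this
  have h3 := hasDerivAt_logre_sum hq0 hq1 hα0 hs
  have hF := (h1.add h2).add h3
  apply hF.congr_of_eventuallyEq
  filter_upwards [Ioi_mem_nhds hs] with u hu
  have := g0_re_eq hq0 hq1 hθ hα0 hα (Set.mem_Ioi.mp hu)
  rw [this]
  congr 1
  exact tsum_congr fun k => (Complex.log_re _).symm

include hα0 in
lemma re_eC_div {s : ℝ} (hs : 0 < s) :
    (eC / wC α s).re = cR * (α + 2 * s * cR) / Complex.normSq (wC α s) := by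
  rw [Complex.div_re, eC_re, eC_im, wC_re, wC_im, ← add_div]
  congr 1
  ring

lemma re_term_div (hq0 : 0 < q) {s : ℝ} (k : ℕ) :
    (-(eC * (q : ℂ) ^ k) / (1 - wC α s * (q : ℂ) ^ k)).re
      = cR * (q ^ k * (q ^ k * (α + 2 * s * cR) - 1))
          / Complex.normSq (1 - wC α s * (q : ℂ) ^ k) := by
  rw [Complex.div_re, wfact_re hq0, wfact_im hq0]
  have hre : (-(eC * (q : ℂ) ^ k)).re = -(cR * q ^ k) := by
    rw [Complex.neg_re, show ((q:ℂ) ^ k) = ((q ^ k : ℝ) : ℂ) from by push_cast; ring,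
      Complex.mul_re]
    simp only [Complex.ofReal_re, Complex.ofReal_im, mul_zero, sub_zero, eC_re]
  have him : (-(eC * (q : ℂ) ^ k)).im = -(cR * q ^ k) := by
    rw [Complex.neg_im, show ((q:ℂ) ^ k) = ((q ^ k : ℝ) : ℂ) from by push_cast; ring,
      Complex.mul_im]
    simp only [Complex.ofReal_re, Complex.ofReal_im, mul_zero, add_zero, eC_im]
    ring
  rw [hre, him, ← add_div]
  congr 1
  ring

include hq0 hα0 in
lemma normSq_w_eq {s : ℝ} :
    Complex.normSq (wC α s) = α ^ 2 + 2 * α * (s * cR) + 2 * (s * cR) ^ 2 := by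
  rw [Complex.normSq_apply, wC_re, wC_im]
  ring

include hq0 hα0 in
lemma normSq_fact_eq {s : ℝ} (k : ℕ) :
    Complex.normSq (1 - wC α s * (q : ℂ) ^ k)
      = 1 - 2 * q ^ k * (α + s * cR) + q ^ k * q ^ k * Complex.normSq (wC α s) := by
  rw [Complex.normSq_apply, wfact_re hq0, wfact_im hq0, normSq_w_eq hq0 hα0]
  ring

end
end G0C
namespace G0C
open Complex Real Filter G0A G0B

lemma keyid (a c s W D Q : ℝ) (h1 : 1 - a * Q ≠ 0) (hW0 : W ≠ 0) (hD0 : D ≠ 0)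
    (hW : W = a ^ 2 + 2 * a * (s * c) + 2 * (s * c) ^ 2)
    (hD : D = 1 - 2 * Q * (a + s * c) + Q * Q * W)
    (hs2 : s ^ 2 = 2 * (s * c) ^ 2) :
    (Q / (1 - a * Q) ^ 2) * (c * s ^ 2 / W) + (a * Q / (1 - a * Q)) * (c * (a + 2 * s * c) / W)
        + c * (Q * (Q * (a + 2 * s * c) - 1)) / D
      = Q * Q * s ^ 2 * (Q * s ^ 2 * c + a * (1 - a * Q) * c)
          / ((1 - a * Q) ^ 2 * W * D) := by
  rw [hs2]
  generalize hP : 1 - a * Q = P at h1 ⊢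
  field_simp
  subst hP
  subst hD
  subst hW
  ring

variable {q θ α : ℝ}

section
variable (hq0 : 0 < q) (hq1 : q < 1) (hθ : 0 < θ) (hα0 : 0 < α) (hα : α < q ^ θ)

include hq0 hq1 hθ hα in
lemma alpha_lt_one : α < 1 := lt_trans hα (Real.rpow_lt_one hq0.le hq1 hθ)

include hq0 hq1 hθ hα0 hα in
lemma summable_B : Summable (fun k : ℕ => α * q ^ k / (1 - α * q ^ k)) := by
  have h := (summable_inv_denom hq0 hq1 hα0.le
    (alpha_lt_one hq0 hq1 hθ hα) 1).mul_left α
  apply h.congr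
  intro k
  rw [pow_one, mul_div_assoc]

include hq0 hq1 hα0 in
lemma summable_H {s : ℝ} (hs : 0 < s) :
    Summable (fun k : ℕ => (-(eC * (q : ℂ) ^ k) / (1 - wC α s * (q : ℂ) ^ k)).re) := by
  set δ : ℝ := min (1/2 : ℝ) (s * cR / (4 * (α + s + 1))) with hδ
  have hδ0 : 0 < δ := delta_pos hq0 hq1 hα0 hs
  apply summable_geom_bound hq0 hq1 (C := 1/δ)
  intro k
  have hlb := abs_wfact_lb hq0 hq1 hα0 (y := s) hs (by linarith) (by linarith) k
  rw [Real.norm_eq_abs]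
  calc |(-(eC * (q:ℂ) ^ k) / (1 - wC α s * (q:ℂ) ^ k)).re|
      ≤ ‖-(eC * (q:ℂ) ^ k) / (1 - wC α s * (q:ℂ) ^ k)‖ := Complex.abs_re_le_norm _
    _ = q ^ k / ‖1 - wC α s * (q:ℂ) ^ k‖ := by
        rw [norm_div, norm_neg, norm_mul, abs_eC, abs_qpow hq0, one_mul]
    _ ≤ q ^ k / δ := div_le_div_of_nonneg_left (pow_pos hq0 k).le hδ0 hlb
    _ = 1/δ * q ^ k := by ring

include hq0 hq1 hθ hα0 hα in
lemma DF_eq_tsum {s : ℝ} (hs : 0 < s) :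
    -(α * (∑' k : ℕ, q ^ k / (1 - q ^ θ * q ^ k) ^ 2)
            - ∑' k : ℕ, α * q ^ k / (1 - α * q ^ k)) * (eC / wC α s).re
        + (∑' k : ℕ, q ^ k / (1 - q ^ θ * q ^ k) ^ 2) * cR
        + ∑' k : ℕ, (-(eC * (q : ℂ) ^ k) / (1 - wC α s * (q : ℂ) ^ k)).re
      = ∑' k : ℕ,
          ((q ^ k / (1 - q ^ θ * q ^ k) ^ 2)
              * (cR * s ^ 2 / Complex.normSq (wC α s))
            + (α * q ^ k / (1 - α * q ^ k))
              * (cR * (α + 2 * s * cR) / Complex.normSq (wC α s))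
            + (-(eC * (q : ℂ) ^ k) / (1 - wC α s * (q : ℂ) ^ k)).re) := by
  have hx0 : (0:ℝ) ≤ q ^ θ := (Real.rpow_pos_of_pos hq0 θ).le
  have hx1 : q ^ θ < 1 := Real.rpow_lt_one hq0.le hq1 hθ
  have hWn0 : Complex.normSq (wC α s) ≠ 0 := by
    simpa [Complex.normSq_eq_zero] using wC_ne (α := α) hs
  have hs2 : (s:ℝ) ^ 2 = 2 * (s * cR) ^ 2 := by
    have h := cR_sq
    nlinarith [h]
  have hW := normSq_w_eq (q := q) hq0 hα0 (s := s) (α := α)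
  rw [hW] at hWn0
  have e1' : cR - α * (cR * (α + 2 * s * cR) / Complex.normSq (wC α s))
      = cR * s ^ 2 / Complex.normSq (wC α s) := by
    rw [hW, hs2]
    generalize hWe : α ^ 2 + 2 * α * (s * cR) + 2 * (s * cR) ^ 2 = W at hWn0 ⊢
    field_simp
    subst hWe
    ring
  rw [re_eC_div hα0 hs]
  have sA := summable_inv_denom hq0 hq1 hx0 hx1 2
  have sB := summable_B hq0 hq1 hθ hα0 hα
  have sH := summable_H hq0 hq1 hα0 hs
  rw [Summable.tsum_add ((sA.mul_right _).add (sB.mul_right _)) sH, Summable.tsum_add (sA.mul_right _)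
    (sB.mul_right _), tsum_mul_right, tsum_mul_right]
  set KR : ℝ := ∑' k : ℕ, q ^ k / (1 - q ^ θ * q ^ k) ^ 2
  set SB : ℝ := ∑' k : ℕ, α * q ^ k / (1 - α * q ^ k)
  set HH : ℝ := ∑' k : ℕ, (-(eC * (q : ℂ) ^ k) / (1 - wC α s * (q : ℂ) ^ k)).re
  have : -(α * KR - SB) * (cR * (α + 2 * s * cR) / Complex.normSq (wC α s)) + KR * cR
      = KR * (cR * s ^ 2 / Complex.normSq (wC α s))
        + SB * (cR * (α + 2 * s * cR) / Complex.normSq (wC α s)) := by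
    linear_combination KR * e1'
  linarith [this]

end
end G0C
namespace G0C
open Complex Real Filter G0A G0B

variable {q θ α : ℝ}

section
variable (hq0 : 0 < q) (hq1 : q < 1) (hθ : 0 < θ) (hα0 : 0 < α) (hα : α < q ^ θ)

/- abbreviation for the target terms, in normSq form -/
noncomputable def Tk (q α : ℝ) (s : ℝ) (k : ℕ) : ℝ :=
  q ^ k * q ^ k * s ^ 2 * (q ^ k * s ^ 2 * cR + α * (1 - α * q ^ k) * cR)
    / ((1 - α * q ^ k) ^ 2 * Complex.normSq (wC α s)
        * Complex.normSq (1 - wC α s * (q : ℂ) ^ k))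

noncomputable def Vk (q θ α : ℝ) (s : ℝ) (k : ℕ) : ℝ :=
  (q ^ k / (1 - q ^ θ * q ^ k) ^ 2) * (cR * s ^ 2 / Complex.normSq (wC α s))
    + (α * q ^ k / (1 - α * q ^ k)) * (cR * (α + 2 * s * cR) / Complex.normSq (wC α s))
    + (-(eC * (q : ℂ) ^ k) / (1 - wC α s * (q : ℂ) ^ k)).re

include hq0 hq1 hθ hα0 hα in
lemma Vk_eq {s : ℝ} (hs : 0 < s) (k : ℕ) :
    Vk q θ α s k = Tk q α s k
      + (q ^ k / (1 - q ^ θ * q ^ k) ^ 2 - q ^ k / (1 - α * q ^ k) ^ 2)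
          * (cR * s ^ 2 / Complex.normSq (wC α s)) := by
  have hα1 := alpha_lt_one hq0 hq1 hθ hα
  have h1 : 1 - α * q ^ k ≠ 0 := (denom_pos hq0 hq1 hα0.le hα1 k).ne'
  have hW0 : Complex.normSq (wC α s) ≠ 0 := by
    simpa [Complex.normSq_eq_zero] using wC_ne (α := α) hs
  have hD0 : Complex.normSq (1 - wC α s * (q : ℂ) ^ k) ≠ 0 := by
    simpa [Complex.normSq_eq_zero] using wfact_ne (α := α) hq0 hs k
  have hs2 : (s:ℝ) ^ 2 = 2 * (s * cR) ^ 2 := by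
    have h := cR_sq
    nlinarith [h]
  have key := keyid α cR s (Complex.normSq (wC α s))
    (Complex.normSq (1 - wC α s * (q : ℂ) ^ k)) (q ^ k) h1 hW0 hD0
    (normSq_w_eq hq0 hα0) (normSq_fact_eq hq0 hα0 k) hs2
  rw [Vk, Tk, re_term_div hq0]
  linear_combination key

include hq0 hq1 hθ hα0 hα in
lemma Tk_pos {s : ℝ} (hs : 0 < s) (k : ℕ) : 0 < Tk q α s k := by
  have hα1 := alpha_lt_one hq0 hq1 hθ hα
  have e1 : (0:ℝ) < q ^ k := pow_pos hq0 k
  have e2 : (0:ℝ) < s ^ 2 := pow_pos hs 2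
  have hd := denom_pos hq0 hq1 hα0.le hα1 k
  have hWpos : 0 < Complex.normSq (wC α s) :=
    Complex.normSq_pos.mpr (wC_ne hs)
  have hDpos : 0 < Complex.normSq (1 - wC α s * (q : ℂ) ^ k) :=
    Complex.normSq_pos.mpr (wfact_ne hq0 hs k)
  apply div_pos
  · apply mul_pos (mul_pos (mul_pos e1 e1) e2)
    exact add_pos (mul_pos (mul_pos e1 e2) cR_pos)
      (mul_pos (mul_pos hα0 hd) cR_pos)
  · exact mul_pos (mul_pos (pow_pos hd 2) hWpos) hDpos

include hq0 hq1 hθ hα0 hα in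
lemma gap_pos (k : ℕ) :
    0 < q ^ k / (1 - q ^ θ * q ^ k) ^ 2 - q ^ k / (1 - α * q ^ k) ^ 2 := by
  have hx0 : (0:ℝ) ≤ q ^ θ := (Real.rpow_pos_of_pos hq0 θ).le
  have hx1 : q ^ θ < 1 := Real.rpow_lt_one hq0.le hq1 hθ
  have h1 : 0 < 1 - q ^ θ * q ^ k := denom_pos hq0 hq1 hx0 hx1 k
  have h2 : 1 - q ^ θ * q ^ k < 1 - α * q ^ k := by nlinarith [pow_pos hq0 k]
  have := div_lt_div_of_pos_left (pow_pos hq0 k) (pow_pos h1 2)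
    (pow_lt_pow_left₀ h2 h1.le (by norm_num))
  linarith

include hq0 hq1 hθ hα0 hα in
lemma summable_Vk {s : ℝ} (hs : 0 < s) : Summable (Vk q θ α s) := by
  have hx0 : (0:ℝ) ≤ q ^ θ := (Real.rpow_pos_of_pos hq0 θ).le
  have hx1 : q ^ θ < 1 := Real.rpow_lt_one hq0.le hq1 hθ
  exact (((summable_inv_denom hq0 hq1 hx0 hx1 2).mul_right _).add
    ((summable_B hq0 hq1 hθ hα0 hα).mul_right _)).add (summable_H hq0 hq1 hα0 hs)

include hq0 hq1 hθ hα0 hα in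
lemma summable_Tk {s : ℝ} (hs : 0 < s) : Summable (Tk q α s) := by
  apply Summable.of_nonneg_of_le (fun k => (Tk_pos hq0 hq1 hθ hα0 hα hs k).le)
    (fun k => ?_) (summable_Vk hq0 hq1 hθ hα0 hα hs)
  rw [show Vk q θ α s k = _ from Vk_eq hq0 hq1 hθ hα0 hα hs k] at *
  have hWpos : 0 < Complex.normSq (wC α s) := Complex.normSq_pos.mpr (wC_ne hs)
  have hgap := gap_pos hq0 hq1 hθ hα0 hα k
  have : 0 < cR * s ^ 2 / Complex.normSq (wC α s) :=
    div_pos (mul_pos cR_pos (pow_pos hs 2)) hWpos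
  nlinarith

include hq0 hq1 hθ hα0 hα in
lemma tsum_Tk_lt_deriv {s : ℝ} (hs : 0 < s) :
    (∑' k : ℕ, Tk q α s k) < deriv (fun u : ℝ => (g0 q θ α (WcA q α u)).re) s
      ∧ 0 < ∑' k : ℕ, Tk q α s k := by
  have hWpos : 0 < Complex.normSq (wC α s) := Complex.normSq_pos.mpr (wC_ne hs)
  have hcs : 0 < cR * s ^ 2 / Complex.normSq (wC α s) :=
    div_pos (mul_pos cR_pos (pow_pos hs 2)) hWpos
  have hderiv : deriv (fun u : ℝ => (g0 q θ α (WcA q α u)).re) s = ∑' k : ℕ, Vk q θ α s k := by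
    rw [(hasDerivAt_main hq0 hq1 hθ hα0 hα hs).deriv, DF_eq_tsum hq0 hq1 hθ hα0 hα hs]
    rfl
  have hle : ∀ k, Tk q α s k ≤ Vk q θ α s k := by
    intro k
    rw [Vk_eq hq0 hq1 hθ hα0 hα hs k]
    nlinarith [gap_pos hq0 hq1 hθ hα0 hα k, hcs]
  have hlt : Tk q α s 0 < Vk q θ α s 0 := by
    rw [Vk_eq hq0 hq1 hθ hα0 hα hs 0]
    nlinarith [gap_pos hq0 hq1 hθ hα0 hα 0, hcs]
  constructor
  · rw [hderiv]
    exact Summable.tsum_lt_tsum hle hlt (summable_Tk hq0 hq1 hθ hα0 hα hs)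
      (summable_Vk hq0 hq1 hθ hα0 hα hs)
  · have h0 : ∀ k : ℕ, (0:ℝ) ≤ Tk q α s k := fun k => (Tk_pos hq0 hq1 hθ hα0 hα hs k).le
    calc (0:ℝ) = ∑' _ : ℕ, (0:ℝ) := by simp
      _ < ∑' k, Tk q α s k :=
        Summable.tsum_lt_tsum (f := fun _ : ℕ => (0:ℝ)) h0 (Tk_pos hq0 hq1 hθ hα0 hα hs 0)
          summable_zero (summable_Tk hq0 hq1 hθ hα0 hα hs)

include hq0 hq1 hθ hα0 hα in
lemma strictMono_main :
    StrictMonoOn (fun s : ℝ => (g0 q θ α (WcA q α s)).re) (Set.Ioi 0) := by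
  apply strictMonoOn_of_deriv_pos (convex_Ioi 0)
  · intro x hx
    exact ((hasDerivAt_main hq0 hq1 hθ hα0 hα (Set.mem_Ioi.mp hx)).continuousAt).continuousWithinAt
  · intro x hx
    rw [interior_Ioi] at hx
    have h := tsum_Tk_lt_deriv hq0 hq1 hθ hα0 hα (Set.mem_Ioi.mp hx)
    linarith [h.1, h.2]

end
end G0C
namespace G0C
open Complex Real Filter G0A G0B

variable {q θ α : ℝ}

lemma Tstmt_eq (s : ℝ) (k : ℕ) :
    q ^ (2 * k) * s ^ 2 *
        (q ^ (k : ℕ) * s ^ 2 * Real.cos (Real.pi / 4)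
          - (1 - 2 * α * q ^ (k : ℕ)) * s * Real.cos (Real.pi / 2)
          - α * (1 - α * q ^ (k : ℕ)) * Real.cos (3 * Real.pi / 4)) /
        ((1 - α * q ^ (k : ℕ)) ^ 2 *
          ‖(α : ℂ) + (s : ℂ) * Complex.exp (Complex.I * (Real.pi / 4))‖ ^ 2 *
          ‖1 - ((α : ℂ) + (s : ℂ) * Complex.exp (Complex.I * (Real.pi / 4)))
            * (q : ℂ) ^ (k : ℕ)‖ ^ 2)
      = Tk q α s k := by
  have hw : ((α : ℂ) + (s : ℂ) * Complex.exp (Complex.I * (Real.pi / 4))) = wC α s := rfl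
  have hcr : cR = Real.sqrt 2 / 2 := rfl
  have h34 : (3 : ℝ) * Real.pi / 4 = Real.pi - Real.pi / 4 := by ring
  rw [hw, Complex.sq_norm, Complex.sq_norm, Real.cos_pi_div_two, h34, Real.cos_pi_sub,
    Real.cos_pi_div_four, Tk, hcr, two_mul, pow_add]
  ring

end G0C


theorem g0_steep_descent (q θ α : ℝ) (hq0 : 0 < q) (hq1 : q < 1) (hθ : 0 < θ)
    (hα0 : 0 < α) (hα : α < q ^ θ) :
    (∀ s : ℝ, 0 < s →
      (∑' k : ℕ, q ^ (2 * k) * s ^ 2 *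
          (q ^ (k : ℕ) * s ^ 2 * Real.cos (Real.pi / 4)
            - (1 - 2 * α * q ^ (k : ℕ)) * s * Real.cos (Real.pi / 2)
            - α * (1 - α * q ^ (k : ℕ)) * Real.cos (3 * Real.pi / 4)) /
          ((1 - α * q ^ (k : ℕ)) ^ 2 *
            ‖(α : ℂ) + (s : ℂ) * Complex.exp (Complex.I * (Real.pi / 4))‖ ^ 2 *
            ‖1 - ((α : ℂ) + (s : ℂ) * Complex.exp (Complex.I * (Real.pi / 4)))
              * (q : ℂ) ^ (k : ℕ)‖ ^ 2))
        < deriv (fun u : ℝ => (g0 q θ α (WcA q α u)).re) s ∧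
      0 < ∑' k : ℕ, q ^ (2 * k) * s ^ 2 *
          (q ^ (k : ℕ) * s ^ 2 * Real.cos (Real.pi / 4)
            - (1 - 2 * α * q ^ (k : ℕ)) * s * Real.cos (Real.pi / 2)
            - α * (1 - α * q ^ (k : ℕ)) * Real.cos (3 * Real.pi / 4)) /
          ((1 - α * q ^ (k : ℕ)) ^ 2 *
            ‖(α : ℂ) + (s : ℂ) * Complex.exp (Complex.I * (Real.pi / 4))‖ ^ 2 *
            ‖1 - ((α : ℂ) + (s : ℂ) * Complex.exp (Complex.I * (Real.pi / 4)))
              * (q : ℂ) ^ (k : ℕ)‖ ^ 2))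
    ∧ StrictMonoOn (fun s : ℝ => (g0 q θ α (WcA q α s)).re) (Set.Ioi 0) := by
  constructor
  · intro s hs
    have heq : (∑' k : ℕ, q ^ (2 * k) * s ^ 2 *
          (q ^ (k : ℕ) * s ^ 2 * Real.cos (Real.pi / 4)
            - (1 - 2 * α * q ^ (k : ℕ)) * s * Real.cos (Real.pi / 2)
            - α * (1 - α * q ^ (k : ℕ)) * Real.cos (3 * Real.pi / 4)) /
          ((1 - α * q ^ (k : ℕ)) ^ 2 *
            ‖(α : ℂ) + (s : ℂ) * Complex.exp (Complex.I * (Real.pi / 4))‖ ^ 2 *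
            ‖1 - ((α : ℂ) + (s : ℂ) * Complex.exp (Complex.I * (Real.pi / 4)))
              * (q : ℂ) ^ (k : ℕ)‖ ^ 2))
        = ∑' k : ℕ, G0C.Tk q α s k :=
      tsum_congr fun k => G0C.Tstmt_eq s k
    rw [heq]
    exact G0C.tsum_Tk_lt_deriv hq0 hq1 hθ hα0 hα hs
  · exact G0C.strictMono_main hq0 hq1 hθ hα0 hα
end

section
/- Fix 0 < q < 1, θ > 0, and rates a_1,…,a_m with exactly k equal to q^θ and the rest greater than q^θ. There exist constants c' > 0 and C' > 0 such that for all complex Z, W with |Z - θ| < c' and |W - θ| < c', one has |φ(Z)/φ(W)| ≤ C' · |(Z-θ)/(W-θ)|^k. -/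
open Complex Real Filter

set_option maxHeartbeats 1000000

section lemmas
variable {q : ℝ} (hq0 : 0 < q) (hq1 : q < 1)

lemma qp_factor_ne (hq0 : 0 < q) (hq1 : q < 1) {u : ℂ} (hu : ‖u‖ < 1) (n : ℕ) :
    1 - u * (q:ℂ) ^ n ≠ 0 := by
  intro h
  have h1 : u * (q:ℂ) ^ n = 1 := by linear_combination -h
  have : ‖u * (q:ℂ) ^ n‖ < 1 := by
    rw [norm_mul, norm_pow, Complex.norm_real, Real.norm_eq_abs, abs_of_pos hq0]
    calc ‖u‖ * q ^ n ≤ ‖u‖ * 1 := by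
          exact mul_le_mul_of_nonneg_left (pow_le_one₀ hq0.le hq1.le) (norm_nonneg u)
      _ < 1 := by simpa using hu
  rw [h1] at this; simp at this

lemma qp_summable_log (hq0 : 0 < q) (hq1 : q < 1) {u : ℂ} (hu : ‖u‖ < 1) :
    Summable fun n : ℕ => Complex.log (1 - u * (q:ℂ) ^ n) := by
  obtain ⟨N, hN⟩ := exists_pow_lt_of_lt_one (by norm_num : (0:ℝ) < 1/2) hq1
  rw [← summable_nat_add_iff N]
  apply Summable.of_norm_bounded (g := fun n => 3/2 * q ^ N * q ^ n)
  · exact (summable_geometric_of_lt_one hq0.le hq1).mul_left _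
  · intro n
    have hqn : ‖-(u * (q:ℂ) ^ (n + N))‖ ≤ 1/2 := by
      rw [norm_neg, norm_mul, norm_pow, Complex.norm_real, Real.norm_eq_abs, abs_of_pos hq0]
      calc ‖u‖ * q ^ (n + N) ≤ 1 * q ^ (n + N) := by
            exact mul_le_mul_of_nonneg_right hu.le (by positivity)
        _ = q ^ n * q ^ N := by rw [one_mul, pow_add]
        _ ≤ 1 * q ^ N := by
            exact mul_le_mul_of_nonneg_right (pow_le_one₀ hq0.le hq1.le) (by positivity)
        _ ≤ 1/2 := by rw [one_mul]; exact hN.le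
    have := Complex.norm_log_one_add_half_le_self hqn
    rw [show (1:ℂ) + -(u * (q:ℂ)^(n+N)) = 1 - u * (q:ℂ)^(n+N) by ring] at this
    refine this.trans ?_
    have : ‖-(u * (q:ℂ) ^ (n + N))‖ ≤ q ^ N * q ^ n := by
      rw [norm_neg, norm_mul, norm_pow, Complex.norm_real, Real.norm_eq_abs, abs_of_pos hq0]
      calc ‖u‖ * q ^ (n + N) ≤ 1 * q ^ (n + N) := by
            exact mul_le_mul_of_nonneg_right hu.le (by positivity)
        _ = q ^ N * q ^ n := by rw [one_mul, pow_add]; ring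
    nlinarith [this]

lemma qp_eq_exp (hq0 : 0 < q) (hq1 : q < 1) {u : ℂ} (hu : ‖u‖ < 1) :
    qPoch u q = Complex.exp (∑' n : ℕ, Complex.log (1 - u * (q:ℂ) ^ n)) := by
  exact (Complex.cexp_tsum_eq_tprod (fun n => qp_factor_ne hq0 hq1 hu n)
    (qp_summable_log hq0 hq1 hu)).symm

lemma qp_ne_zero (hq0 : 0 < q) (hq1 : q < 1) {u : ℂ} (hu : ‖u‖ < 1) :
    qPoch u q ≠ 0 := by
  rw [qp_eq_exp hq0 hq1 hu]; exact Complex.exp_ne_zero _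

lemma qp_multipliable (hq0 : 0 < q) (hq1 : q < 1) {u : ℂ} (hu : ‖u‖ < 1) :
    Multipliable fun n : ℕ => 1 - u * (q:ℂ) ^ n := by
  exact Complex.multipliable_of_summable_log (qp_summable_log hq0 hq1 hu)

lemma qp_factorize (hq0 : 0 < q) (hq1 : q < 1) {u : ℂ} (hu : ‖u * q‖ < 1) :
    qPoch u q = (1 - u) * qPoch (u * q) q := by
  have hm : Multipliable fun n : ℕ => 1 - u * (q:ℂ) ^ (n + 1) := by
    have := qp_multipliable hq0 hq1 hu
    apply this.congr
    intro n; ring_nf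
  rw [qPoch, tprod_eq_zero_mul' hm]
  congr 1
  · simp
  · rw [qPoch]
    apply tprod_congr
    intro n; ring
end lemmas

section cont
variable {q : ℝ}

lemma qp_log_bound (hq0 : 0 < q) (hq1 : q < 1) {u : ℂ} (hu : ‖u‖ < 1) {N : ℕ}
    (hN : q ^ N ≤ 1/2) (n : ℕ) :
    ‖Complex.log (1 - u * (q:ℂ) ^ (n + N))‖ ≤ 3/2 * q ^ N * q ^ n := by
  have hb : ‖-(u * (q:ℂ) ^ (n + N))‖ ≤ q ^ N * q ^ n := by
    rw [norm_neg, norm_mul, norm_pow, Complex.norm_real, Real.norm_eq_abs, abs_of_pos hq0]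
    calc ‖u‖ * q ^ (n + N) ≤ 1 * q ^ (n + N) := by
          exact mul_le_mul_of_nonneg_right hu.le (by positivity)
      _ = q ^ N * q ^ n := by rw [one_mul, pow_add]; ring
  have hqn : ‖-(u * (q:ℂ) ^ (n + N))‖ ≤ 1/2 := by
    refine hb.trans ?_
    calc q ^ N * q ^ n ≤ q ^ N * 1 := by
          exact mul_le_mul_of_nonneg_left (pow_le_one₀ hq0.le hq1.le) (by positivity)
      _ ≤ 1/2 := by rw [mul_one]; exact hN
  have h := Complex.norm_log_one_add_half_le_self hqn
  rw [show (1:ℂ) + -(u * (q:ℂ)^(n+N)) = 1 - u * (q:ℂ)^(n+N) by ring] at h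
  refine h.trans ?_
  nlinarith [hb]

lemma qp_continuousAt (hq0 : 0 < q) (hq1 : q < 1) {u₀ : ℂ} (hu : ‖u₀‖ < 1) :
    ContinuousAt (fun u : ℂ => qPoch u q) u₀ := by
  set r := (1 + ‖u₀‖)/2 with hr
  have hr0 : ‖u₀‖ < r := by rw [hr]; linarith
  have hr1 : r < 1 := by rw [hr]; linarith
  obtain ⟨N, hN⟩ := exists_pow_lt_of_lt_one (show (0:ℝ) < 1/2 by norm_num) hq1
  set s := Metric.ball (0:ℂ) r with hs
  have hmem : ∀ u ∈ s, ‖u‖ < 1 := by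
    intro u hu'
    rw [hs, Metric.mem_ball, dist_zero_right] at hu'
    exact hu'.trans hr1
  have hsn : s ∈ nhds u₀ := Metric.isOpen_ball.mem_nhds
    (by rw [Metric.mem_ball, dist_zero_right]; exact hr0)
  have hslit : ∀ (nn : ℕ) (u : ℂ), u ∈ s → (1 - u * (q:ℂ) ^ nn) ∈ Complex.slitPlane := by
    intro nn u hu'
    have h1 : ‖-(u * (q:ℂ) ^ nn)‖ < 1 := by
      rw [norm_neg, norm_mul, norm_pow, Complex.norm_real, Real.norm_eq_abs, abs_of_pos hq0]
      calc ‖u‖ * q ^ nn ≤ ‖u‖ * 1 :=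
            mul_le_mul_of_nonneg_left (pow_le_one₀ hq0.le hq1.le) (norm_nonneg u)
        _ < 1 := by rw [mul_one]; exact hmem u hu'
    have h2 := Complex.mem_slitPlane_of_norm_lt_one h1
    rwa [show (1:ℂ) + -(u * (q:ℂ)^nn) = 1 - u * (q:ℂ)^nn by ring] at h2
  have hcterm : ∀ nn : ℕ, ContinuousOn (fun u : ℂ => Complex.log (1 - u * (q:ℂ) ^ nn)) s := by
    intro nn
    exact ((continuousOn_const.sub (continuousOn_id.mul continuousOn_const)).clog
      (fun u hu' => hslit nn u hu'))
  have key : ContinuousOn (fun u : ℂ => ∑' n : ℕ, Complex.log (1 - u * (q:ℂ) ^ n)) s := by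
    have hsplit : Set.EqOn (fun u : ℂ => ∑' n : ℕ, Complex.log (1 - u * (q:ℂ) ^ n))
        (fun u : ℂ => (∑ n ∈ Finset.range N, Complex.log (1 - u * (q:ℂ) ^ n))
          + ∑' n : ℕ, Complex.log (1 - u * (q:ℂ) ^ (n + N))) s := by
      intro u hu'
      exact ((qp_summable_log hq0 hq1 (hmem u hu')).sum_add_tsum_nat_add N).symm
    refine ContinuousOn.congr ?_ hsplit
    apply ContinuousOn.add
    · exact continuousOn_finset_sum _ (fun n _ => hcterm n)
    · have hbdd : ∀ (n : ℕ) (x : ℂ), x ∈ s →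
          ‖Complex.log (1 - x * (q:ℂ) ^ (n + N))‖ ≤ 3/2 * q ^ N * q ^ n :=
        fun n x hx => qp_log_bound hq0 hq1 (hmem x hx) hN.le n
      have hsum : Summable (fun n : ℕ => 3/2 * q ^ N * q ^ n) :=
        (summable_geometric_of_lt_one hq0.le hq1).mul_left _
      refine (tendstoUniformlyOn_tsum hsum hbdd).continuousOn ?_
      exact Filter.Eventually.frequently (Filter.Eventually.of_forall
        (fun t => continuousOn_finset_sum _ (fun n _ => hcterm (n + N))))
  have hexp : ContinuousAt (fun u : ℂ => Complex.exp (∑' n : ℕ, Complex.log (1 - u * (q:ℂ) ^ n)))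
      u₀ := (Complex.continuous_exp.comp_continuousOn key).continuousAt hsn
  apply hexp.congr
  filter_upwards [hsn] with u hu'
  exact (qp_eq_exp hq0 hq1 (hmem u hu')).symm
end cont

/-- `φ(Z) = ∏_{j=1}^m (q^Z/a_j ; q)_∞ / ((q^Z;q)_∞)^m`. -/
noncomputable def phiF (q : ℝ) {m : ℕ} (a : Fin m → ℝ) (Z : ℂ) : ℂ :=
  (∏ j : Fin m, qPoch ((q : ℂ) ^ Z / (a j : ℂ)) (q : ℂ)) / (qPoch ((q : ℂ) ^ Z) (q : ℂ)) ^ m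

theorem phi_ratio_bound_critical (q θ : ℝ) (hq0 : 0 < q) (hq1 : q < 1) (hθ : 0 < θ)
    (m k : ℕ) (a : Fin m → ℝ)
    (ha : ∀ j, a j = q ^ θ ∨ q ^ θ < a j)
    (hk : (Finset.univ.filter (fun j : Fin m => a j = q ^ θ)).card = k) :
    ∃ c' > (0 : ℝ), ∃ C' > (0 : ℝ), ∀ Z W : ℂ,
      ‖Z - (θ : ℂ)‖ < c' → ‖W - (θ : ℂ)‖ < c' →
      ‖phiF q a Z / phiF q a W‖ ≤
        C' * (‖Z - (θ : ℂ)‖ / ‖W - (θ : ℂ)‖) ^ k := by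
  set L := Real.log q with hLdef
  have hL : L < 0 := Real.log_neg hq0 hq1
  have hLpos : (0:ℝ) < -L := by linarith
  have hqc : (q:ℂ) ≠ 0 := by exact_mod_cast hq0.ne'
  set E : ℂ → ℂ := fun w => Complex.exp ((L:ℂ) * w) with hE
  have hcpow : ∀ Z : ℂ, (q:ℂ) ^ Z = E Z := by
    intro Z
    rw [Complex.cpow_def_of_ne_zero hqc, ← Complex.ofReal_log hq0.le]
  have hnormE : ∀ w : ℂ, ‖E w‖ = Real.exp (L * w.re) := by
    intro w
    rw [hE]
    simp only [Complex.norm_exp]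
    congr 1
    simp [Complex.mul_re]
  have hEθ : ((q ^ θ : ℝ) : ℂ) = E (θ:ℂ) := by
    rw [Complex.ofReal_cpow hq0.le, hcpow]
  have hE0 : E 0 = 1 := by rw [hE]; simp
  -- norm bound for the factorization
  have hEq_lt : ∀ w : ℂ, ‖w‖ ≤ 1/2 → ‖E w * (q:ℂ)‖ < 1 := by
    intro w hw
    have hre : |w.re| ≤ 1/2 := (Complex.abs_re_le_norm w).trans hw
    rw [norm_mul, hnormE, Complex.norm_real, Real.norm_eq_abs, abs_of_pos hq0,
      ← Real.exp_log hq0, ← Real.exp_add]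
    rw [Real.exp_lt_one_iff]
    have h1 : L * w.re ≤ -L * |w.re| := by
      rcases abs_cases w.re with ⟨h, _⟩ | ⟨h, _⟩ <;> nlinarith
    have h2 : -L * |w.re| ≤ -L * (1/2) := by nlinarith
    linarith
  -- the factorization of the critical qPoch
  have hfac : ∀ w : ℂ, ‖w‖ ≤ 1/2 →
      qPoch (E w) (q:ℂ) = (1 - E w) * qPoch (E w * (q:ℂ)) (q:ℂ) :=
    fun w hw => qp_factorize hq0 hq1 (hEq_lt w hw)
  -- the regular part G
  set G : ℂ → ℂ := fun Z => qPoch (E (Z - (θ:ℂ)) * (q:ℂ)) (q:ℂ) ^ k *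
      (∏ j ∈ Finset.univ.filter (fun j : Fin m => ¬ a j = q ^ θ),
        qPoch (E Z / (a j : ℂ)) (q:ℂ)) /
      qPoch (E Z) (q:ℂ) ^ m with hG
  -- factorization of phiF
  have hphi : ∀ Z : ℂ, ‖Z - (θ:ℂ)‖ ≤ 1/2 →
      phiF q a Z = (1 - E (Z - (θ:ℂ))) ^ k * G Z := by
    intro Z hZ
    have hcrit : ∀ j ∈ Finset.univ.filter (fun j : Fin m => a j = q ^ θ),
        qPoch ((q:ℂ) ^ Z / (a j : ℂ)) (q:ℂ)
          = (1 - E (Z - (θ:ℂ))) * qPoch (E (Z - (θ:ℂ)) * (q:ℂ)) (q:ℂ) := by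
      intro j hj
      rw [Finset.mem_filter] at hj
      have : (q:ℂ) ^ Z / (a j : ℂ) = E (Z - (θ:ℂ)) := by
        rw [hj.2, hcpow, hEθ, hE, ← Complex.exp_sub]
        congr 1
        ring
      rw [this, hfac _ hZ]
    rw [phiF, ← Finset.prod_filter_mul_prod_filter_not Finset.univ
      (fun j : Fin m => a j = q ^ θ), Finset.prod_congr rfl hcrit, Finset.prod_const, hk]
    have hrest : ∀ j ∈ Finset.univ.filter (fun j : Fin m => ¬ a j = q ^ θ),
        qPoch ((q:ℂ) ^ Z / (a j : ℂ)) (q:ℂ) = qPoch (E Z / (a j : ℂ)) (q:ℂ) := by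
      intro j _; rw [hcpow]
    rw [Finset.prod_congr rfl hrest, hcpow, hG, mul_pow]
    ring
  -- continuity of G at θ and nonvanishing
  have hEcont : Continuous E := by
    rw [hE]; exact Complex.continuous_exp.comp (continuous_const.mul continuous_id)
  have hq_lt : ‖E ((θ:ℂ) - (θ:ℂ)) * (q:ℂ)‖ < 1 := by
    rw [sub_self, hE0, one_mul, Complex.norm_real, Real.norm_eq_abs, abs_of_pos hq0]
    exact hq1
  have hqθ_lt : ‖E (θ:ℂ)‖ < 1 := by
    rw [← hEθ, Complex.norm_real, Real.norm_eq_abs, abs_of_pos (Real.rpow_pos_of_pos hq0 θ)]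
    exact Real.rpow_lt_one hq0.le hq1 hθ
  have hrest_lt : ∀ j ∈ Finset.univ.filter (fun j : Fin m => ¬ a j = q ^ θ),
      ‖E (θ:ℂ) / (a j : ℂ)‖ < 1 := by
    intro j hj
    rw [Finset.mem_filter] at hj
    have haj : q ^ θ < a j := (ha j).resolve_left hj.2
    have haj0 : 0 < a j := lt_trans (Real.rpow_pos_of_pos hq0 θ) haj
    rw [← hEθ, norm_div, Complex.norm_real, Complex.norm_real, Real.norm_eq_abs,
      Real.norm_eq_abs, abs_of_pos (Real.rpow_pos_of_pos hq0 θ), abs_of_pos haj0,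
      div_lt_one haj0]
    exact haj
  have hG1 : ContinuousAt (fun Z : ℂ => qPoch (E (Z - (θ:ℂ)) * (q:ℂ)) (q:ℂ)) (θ:ℂ) := by
    have hf : ContinuousAt (fun Z : ℂ => E (Z - (θ:ℂ)) * (q:ℂ)) (θ:ℂ) :=
      (((hEcont.comp (continuous_id.sub continuous_const)).mul continuous_const).continuousAt)
    exact ContinuousAt.comp (g := fun u : ℂ => qPoch u (q:ℂ)) (x := (θ:ℂ))
      (f := fun Z : ℂ => E (Z - (θ:ℂ)) * (q:ℂ)) (qp_continuousAt hq0 hq1 hq_lt) hf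
  have hG2 : ∀ j ∈ Finset.univ.filter (fun j : Fin m => ¬ a j = q ^ θ),
      ContinuousAt (fun Z : ℂ => qPoch (E Z / (a j : ℂ)) (q:ℂ)) (θ:ℂ) := by
    intro j hj
    have hf : ContinuousAt (fun Z : ℂ => E Z / (a j : ℂ)) (θ:ℂ) :=
      (hEcont.div_const _).continuousAt
    exact ContinuousAt.comp (g := fun u : ℂ => qPoch u (q:ℂ)) (x := (θ:ℂ))
      (f := fun Z : ℂ => E Z / (a j : ℂ)) (qp_continuousAt hq0 hq1 (hrest_lt j hj)) hf
  have hG3 : ContinuousAt (fun Z : ℂ => qPoch (E Z) (q:ℂ)) (θ:ℂ) :=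
    ContinuousAt.comp (g := fun u : ℂ => qPoch u (q:ℂ)) (x := (θ:ℂ)) (f := E)
      (qp_continuousAt hq0 hq1 hqθ_lt) hEcont.continuousAt
  have hGcont : ContinuousAt G (θ:ℂ) := by
    rw [hG]
    exact ((hG1.pow k).mul (tendsto_finset_prod _ (fun j hj => hG2 j hj))).div
      (hG3.pow m) (pow_ne_zero m (qp_ne_zero hq0 hq1 hqθ_lt))
  have hGne : G (θ:ℂ) ≠ 0 := by
    rw [hG]
    exact div_ne_zero
      (mul_ne_zero (pow_ne_zero _ (qp_ne_zero hq0 hq1 hq_lt))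
        (Finset.prod_ne_zero_iff.mpr (fun j hj => qp_ne_zero hq0 hq1 (hrest_lt j hj))))
      (pow_ne_zero _ (qp_ne_zero hq0 hq1 hqθ_lt))
  -- extract a ball on which |G| is comparable to |G θ|
  set g0 := ‖G (θ:ℂ)‖ with hg0def
  have hg0 : 0 < g0 := norm_pos_iff.mpr hGne
  have habs : Filter.Tendsto (fun Z : ℂ => ‖G Z‖) (nhds (θ:ℂ))
      (nhds g0) := (continuous_norm.continuousAt).comp hGcont
  have hball : ∀ᶠ Z : ℂ in nhds (θ:ℂ), ‖G Z‖ ∈ Set.Ioo (g0/2) (2*g0) :=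
    habs (Ioo_mem_nhds (by linarith) (by linarith))
  rw [Metric.eventually_nhds_iff] at hball
  obtain ⟨δ, hδ0, hδ⟩ := hball
  -- the constants
  refine ⟨min δ (min (1/2) (1/(2*(-L)))),
    lt_min hδ0 (lt_min (by norm_num) (by positivity)), 4^(k+1), by positivity, ?_⟩
  intro Z W hZ hW
  -- basic consequences of the smallness assumptions
  have hsmall : ∀ {Y : ℂ}, ‖Y - (θ:ℂ)‖ < min δ (min (1/2) (1/(2*(-L)))) →
      ‖Y - (θ:ℂ)‖ ≤ 1/2 ∧ (-L) * ‖Y - (θ:ℂ)‖ ≤ 1/2 ∧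
      g0/2 < ‖G Y‖ ∧ ‖G Y‖ < 2*g0 := by
    intro Y hY
    have h1 : ‖Y - (θ:ℂ)‖ < δ := lt_of_lt_of_le hY (min_le_left _ _)
    have h2 : ‖Y - (θ:ℂ)‖ ≤ 1/2 :=
      (lt_of_lt_of_le hY ((min_le_right _ _).trans (min_le_left _ _))).le
    have h3 : ‖Y - (θ:ℂ)‖ ≤ 1/(2*(-L)) :=
      (lt_of_lt_of_le hY ((min_le_right _ _).trans (min_le_right _ _))).le
    have h4 : (-L) * ‖Y - (θ:ℂ)‖ ≤ 1/2 := by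
      rw [div_mul_eq_div_div] at h3
      have hLpos : (0:ℝ) < -L := by linarith
      calc (-L) * ‖Y - (θ:ℂ)‖ ≤ (-L) * (1/2/(-L)) := by
            exact mul_le_mul_of_nonneg_left h3 hLpos.le
        _ = 1/2 := by field_simp [hL.ne]
    have h5 := hδ (y := Y) (by rwa [Complex.dist_eq])
    exact ⟨h2, h4, h5.1, h5.2⟩
  obtain ⟨hZ1, hZ2, hZ3, hZ4⟩ := hsmall hZ
  obtain ⟨hW1, hW2, hW3, hW4⟩ := hsmall hW
  -- bounds on the critical factor
  have habsv : ∀ w : ℂ, ‖(L:ℂ) * w‖ = (-L) * ‖w‖ := by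
    intro w
    rw [norm_mul, Complex.norm_real, Real.norm_eq_abs, abs_of_neg hL]
  have hTub : ∀ w : ℂ, (-L) * ‖w‖ ≤ 1/2 →
      ‖1 - E w‖ ≤ 2 * (-L) * ‖w‖ := by
    intro w hw
    rw [norm_sub_rev, hE]
    have h1 : ‖(L:ℂ) * w‖ ≤ 1 := by rw [habsv]; linarith
    calc ‖Complex.exp ((L:ℂ)*w) - 1‖ ≤ 2 * ‖(L:ℂ)*w‖ :=
          Complex.norm_exp_sub_one_le h1
      _ = 2 * (-L) * ‖w‖ := by rw [habsv]; ring
  have hTlb : ∀ w : ℂ, (-L) * ‖w‖ ≤ 1/2 →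
      (-L)/2 * ‖w‖ ≤ ‖1 - E w‖ := by
    intro w hw
    rw [norm_sub_rev, hE]
    have h1 : ‖(L:ℂ) * w‖ ≤ 1 := by rw [habsv]; linarith
    have h2 := Complex.norm_exp_sub_one_sub_id_le h1
    have h3 : ‖(L:ℂ)*w‖ ≤
        ‖Complex.exp ((L:ℂ)*w) - 1‖ +
          ‖Complex.exp ((L:ℂ)*w) - 1 - (L:ℂ)*w‖ := by
      calc ‖(L:ℂ)*w‖
          = ‖(Complex.exp ((L:ℂ)*w) - 1) -
              (Complex.exp ((L:ℂ)*w) - 1 - (L:ℂ)*w)‖ := by ring_nf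
        _ ≤ _ := norm_sub_le _ _
    have h4 : ‖(L:ℂ)*w‖ = (-L) * ‖w‖ := habsv w
    nlinarith [norm_nonneg ((L:ℂ)*w), norm_nonneg (Complex.exp ((L:ℂ)*w) - 1)]
  -- upper bound for |phi Z|
  have hUB : ‖phiF q a Z‖ ≤ (2*(-L)*‖Z - (θ:ℂ)‖)^k * (2*g0) := by
    rw [hphi Z hZ1, norm_mul, norm_pow]
    have h1 : ‖1 - E (Z - (θ:ℂ))‖^k ≤ (2*(-L)*‖Z - (θ:ℂ)‖)^k :=
      pow_le_pow_left₀ (norm_nonneg _) (hTub _ hZ2) k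
    exact mul_le_mul h1 hZ4.le (norm_nonneg _)
      (pow_nonneg (by positivity) k)
  -- lower bound for |phi W|
  have hLB : ((-L)/2*‖W - (θ:ℂ)‖)^k * (g0/2) ≤ ‖phiF q a W‖ := by
    rw [hphi W hW1, norm_mul, norm_pow]
    have h1 : ((-L)/2*‖W - (θ:ℂ)‖)^k ≤ ‖1 - E (W - (θ:ℂ))‖^k :=
      pow_le_pow_left₀ (by positivity) (hTlb _ hW2) k
    exact mul_le_mul h1 hW3.le (by positivity) (pow_nonneg (norm_nonneg _) k)
  rcases eq_or_ne W (θ:ℂ) with hWθ | hWθ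
  · subst hWθ
    rcases Nat.eq_zero_or_pos k with hk0 | hkpos
    · subst hk0
      simp only [pow_zero, one_mul, mul_one] at hUB hLB ⊢
      rw [norm_div]
      have hφW : (0:ℝ) < ‖phiF q a (θ:ℂ)‖ := lt_of_lt_of_le (by positivity) hLB
      calc ‖phiF q a Z‖ / ‖phiF q a (θ:ℂ)‖
          ≤ (2*g0) / (g0/2) := by
            exact div_le_div₀ (by positivity) hUB (by positivity) hLB
        _ = 4 := by field_simp; ring
        _ ≤ 4^(0+1) := by norm_num
    · have hφW : phiF q a (θ:ℂ) = 0 := by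
        rw [hphi (θ:ℂ) (by simpa using hW1), sub_self, hE0, sub_self,
          zero_pow hkpos.ne', zero_mul]
      rw [hφW, div_zero, norm_zero]
      positivity
  · have hbpos : 0 < ‖W - (θ:ℂ)‖ :=
      norm_pos_iff.mpr (sub_ne_zero.mpr hWθ)
    have hLBpos : (0:ℝ) < ((-L)/2*‖W - (θ:ℂ)‖)^k * (g0/2) :=
      mul_pos (pow_pos (mul_pos (by positivity) hbpos) k) (by positivity)
    rw [norm_div]
    calc ‖phiF q a Z‖ / ‖phiF q a W‖
        ≤ ((2*(-L)*‖Z - (θ:ℂ)‖)^k * (2*g0)) /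
            (((-L)/2*‖W - (θ:ℂ)‖)^k * (g0/2)) :=
          div_le_div₀ (mul_nonneg (pow_nonneg (by positivity) k) (by positivity))
            hUB hLBpos hLB
      _ = 4^(k+1) * (‖Z - (θ:ℂ)‖ / ‖W - (θ:ℂ)‖)^k := by
          have e1 : (2*(-L)*‖Z - (θ:ℂ)‖)^k
              = (4:ℝ)^k * (((-L)/2*‖W - (θ:ℂ)‖)^k *
                (‖Z - (θ:ℂ)‖ / ‖W - (θ:ℂ)‖)^k) := by
            rw [← mul_pow, ← mul_pow]
            congr 1
            field_simp [hbpos.ne']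
            ring
          have hXpos : (0:ℝ) < ((-L)/2*‖W - (θ:ℂ)‖)^k * (g0/2) := hLBpos
          have e2 : (4:ℝ)^k * (((-L)/2*‖W - (θ:ℂ)‖)^k *
                (‖Z - (θ:ℂ)‖ / ‖W - (θ:ℂ)‖)^k) * (2*g0)
              = (4^(k+1) * (‖Z - (θ:ℂ)‖ / ‖W - (θ:ℂ)‖)^k) *
                (((-L)/2*‖W - (θ:ℂ)‖)^k * (g0/2)) := by
            ring
          rw [e1, e2]
          exact mul_div_cancel_right₀ _ hXpos.ne'
end
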